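/- arXiv:math/0509527 — 5 statements merged into one kernel-verified Lean document; each statement's English description precedes it below -/
import Mathlib

section
/- Let G be a locally compact, compactly generated group and π a continuous unitary representation of G. In Z¹(G,π), endowed with the topology of uniform convergence on compact subsets: (1) the set sublin(G,π) of 1-cocycles with sublinear growth is a closed linear subspace; (2) the set lin(G,π) of 1-cocycles with linear growth is an open subset. -/
open MeasureTheory Filter Topology
open scoped BigOperators

noncomputable section

/-- Word length with respect to a generating set `S`. -/
def wordLength {G : Type*} [Group G] (S : Set G) (g : G) : ℕ :=
  sInf {n : ℕ | ∃ l : List G, l.length = n ∧ (∀ x ∈ l, x ∈ S) ∧ l.prod = g}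

/-- `f₁ ≼ f₂` : there are `M > 0` and a compact set `K` with `f₁ ≤ M f₂` outside `K`. -/
def Preceq {G : Type*} [TopologicalSpace G] (f₁ f₂ : G → ℝ) : Prop :=
  ∃ M > (0:ℝ), ∃ K : Set G, IsCompact K ∧ ∀ g ∉ K, f₁ g ≤ M * f₂ g

/-- `f₁ ≺ f₂` : for every `ε > 0` there is a compact set `K` with `f₁ ≤ ε f₂` outside `K`. -/
def Prec {G : Type*} [TopologicalSpace G] (f₁ f₂ : G → ℝ) : Prop :=
  ∀ ε > (0:ℝ), ∃ K : Set G, IsCompact K ∧ ∀ g ∉ K, f₁ g ≤ ε * f₂ g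

variable {G H : Type*} [Group G] [TopologicalSpace G] [NormedAddCommGroup H]
  [InnerProductSpace ℂ H]

/-- A 1-cocycle of `G` with values in the representation `ρ` has sublinear growth. -/
def SublinGrowth (S : Set G) (f : G → H) : Prop :=
  Prec (fun g => ‖f g‖) (fun g => (wordLength S g : ℝ))

/-- A 1-cocycle of `G` with values in the representation `ρ` has linear growth. -/
def LinGrowth (S : Set G) (f : G → H) : Prop :=
  Preceq (fun g => (wordLength S g : ℝ)) (fun g => ‖f g‖)

/-- The space `Z¹(G,π)` of continuous 1-cocycles, as a subtype of `C(G,H)`; its topology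
(induced by the compact-open topology on `C(G,H)`) is the topology of uniform convergence
on compact subsets. -/
def Z1 (ρ : G →* (H ≃ₗᵢ[ℂ] H)) : Type _ :=
  {f : C(G, H) // ∀ g h : G, f (g * h) = ρ g (f h) + f g}

instance (ρ : G →* (H ≃ₗᵢ[ℂ] H)) : TopologicalSpace (Z1 ρ) :=
  instTopologicalSpaceSubtype

section Aux

variable {G H : Type*} [Group G] [TopologicalSpace G] [NormedAddCommGroup H]
  [InnerProductSpace ℂ H]

/-- Every element of a group generated by a symmetric set `S` is a product of a list in `S`. -/
lemma exists_word_aux (S : Set G) (hSsymm : S⁻¹ = S) (hSgen : Subgroup.closure S = ⊤) (g : G) :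
    ∃ l : List G, (∀ x ∈ l, x ∈ S) ∧ l.prod = g := by
  have hg : g ∈ Submonoid.closure S := by
    have h1 : g ∈ (Subgroup.closure S).toSubmonoid := by
      rw [hSgen]; trivial
    rw [Subgroup.closure_toSubmonoid, hSsymm, Set.union_self] at h1
    exact h1
  exact Submonoid.exists_list_of_mem_closure hg

lemma exists_word_min (S : Set G) (hSsymm : S⁻¹ = S) (hSgen : Subgroup.closure S = ⊤) (g : G) :
    ∃ l : List G, l.length = wordLength S g ∧ (∀ x ∈ l, x ∈ S) ∧ l.prod = g := by
  have hne : {n : ℕ | ∃ l : List G, l.length = n ∧ (∀ x ∈ l, x ∈ S) ∧ l.prod = g}.Nonempty := by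
    obtain ⟨l, hl, hlp⟩ := exists_word_aux S hSsymm hSgen g
    exact ⟨l.length, l, rfl, hl, hlp⟩
  have := Nat.sInf_mem hne
  obtain ⟨l, hlen, hmem, hprod⟩ := this
  exact ⟨l, hlen, hmem, hprod⟩

/-- The fundamental bound: a cocycle bounded by `C` on `S` satisfies `‖c g‖ ≤ |g|_S * C`. -/
lemma cocycle_norm_le (S : Set G) (hSsymm : S⁻¹ = S) (hSgen : Subgroup.closure S = ⊤)
    (ρ : G →* (H ≃ₗᵢ[ℂ] H)) (c : G → H) (hc : ∀ g h : G, c (g * h) = ρ g (c h) + c g)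
    {C : ℝ} (hC : ∀ s ∈ S, ‖c s‖ ≤ C) (g : G) :
    ‖c g‖ ≤ (wordLength S g : ℝ) * C := by
  have hone : c 1 = 0 := by
    have h := hc 1 1
    rw [mul_one, map_one] at h
    simp only [LinearIsometryEquiv.coe_one, id_eq] at h
    exact right_eq_add.mp h
  have key : ∀ l : List G, (∀ x ∈ l, x ∈ S) → ‖c l.prod‖ ≤ (l.length : ℝ) * C := by
    intro l
    induction l with
    | nil => intro _; simp [hone]
    | cons s t ih =>
      intro hmem
      have hs : s ∈ S := hmem s List.mem_cons_self
      have ht : ∀ x ∈ t, x ∈ S := fun x hx => hmem x (List.mem_cons_of_mem s hx)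
      have : c (s * t.prod) = ρ s (c t.prod) + c s := hc s t.prod
      rw [List.prod_cons, this]
      calc ‖ρ s (c t.prod) + c s‖ ≤ ‖ρ s (c t.prod)‖ + ‖c s‖ := norm_add_le _ _
        _ = ‖c t.prod‖ + ‖c s‖ := by rw [LinearIsometryEquiv.norm_map]
        _ ≤ (t.length : ℝ) * C + C := add_le_add (ih ht) (hC s hs)
        _ = ((s :: t).length : ℝ) * C := by
            simp [List.length_cons]; push_cast; ring
  obtain ⟨l, hlen, hmem, hprod⟩ := exists_word_min S hSsymm hSgen g
  have := key l hmem
  rw [hprod, hlen] at this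
  exact this

/-- Basic neighborhoods in the compact-open topology on `C(G,H)`. -/
lemma mem_nhds_compact_aux (f₀ : C(G, H)) (K : Set G) (hK : IsCompact K) {δ : ℝ} (hδ : 0 < δ) :
    {f : C(G, H) | ∀ x ∈ K, dist (f₀ x) (f x) < δ} ∈ 𝓝 f₀ := by
  have hb := nhds_basis_uniformity' (x := f₀)
    (ContinuousMap.hasBasis_compactConvergenceUniformity (α := G) (β := H))
  refine hb.mem_of_mem (i := (K, {p : H × H | dist p.1 p.2 < δ})) ?_
  exact ⟨hK, Metric.dist_mem_uniformity hδ⟩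

end Aux

/-- In `Z¹(G,π)` with the topology of uniform convergence on compact subsets, the set of
sublinear-growth cocycles is a closed linear subspace, and the set of linear-growth cocycles
is open. -/
theorem sublin_closed_subspace_lin_open
    [IsTopologicalGroup G] [LocallyCompactSpace G]
    (S : Set G) (hSopen : IsOpen S) (hScpt : IsCompact (closure S)) (hSsymm : S⁻¹ = S)
    (hSgen : Subgroup.closure S = ⊤)
    (ρ : G →* (H ≃ₗᵢ[ℂ] H)) (hρ : ∀ v : H, Continuous fun g => ρ g v) :
    -- (1) sublin(G,π) is closed in Z¹(G,π) …
    IsClosed {b : Z1 ρ | SublinGrowth S (b.1 : G → H)} ∧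
    -- … and is a linear subspace:
    (∀ b₁ b₂ : Z1 ρ, SublinGrowth S (b₁.1 : G → H) → SublinGrowth S (b₂.1 : G → H) →
      SublinGrowth S ((b₁.1 + b₂.1 : C(G, H)) : G → H)) ∧
    (∀ (c : ℂ) (b : Z1 ρ), SublinGrowth S (b.1 : G → H) →
      SublinGrowth S ((c • b.1 : C(G, H)) : G → H)) ∧
    SublinGrowth S ((0 : C(G, H)) : G → H) ∧
    -- (2) lin(G,π) is open in Z¹(G,π).
    IsOpen {b : Z1 ρ | LinGrowth S (b.1 : G → H)} := by
  -- cocycle identity for differences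
  have hdiff : ∀ b b' : Z1 ρ, ∀ g h : G,
      (fun g => b.1 g - b'.1 g) (g * h) = ρ g (b.1 h - b'.1 h) + (b.1 g - b'.1 g) := by
    intro b b' g h
    simp only
    rw [b.2 g h, b'.2 g h, map_sub]
    abel
  refine ⟨?_, ?_, ?_, ?_, ?_⟩
  · -- closedness of sublin
    apply isClosed_of_closure_subset
    intro b hb ε hε
    have hU : (Subtype.val ⁻¹' {f : C(G, H) | ∀ x ∈ closure S, dist (b.1 x) (f x) < ε/2}
        : Set (Z1 ρ)) ∈ 𝓝 b :=
      continuous_subtype_val.continuousAt.preimage_mem_nhds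
        (mem_nhds_compact_aux b.1 (closure S) hScpt (half_pos hε))
    obtain ⟨b', hb'U, hb'A⟩ := mem_closure_iff_nhds.mp hb _ hU
    have hC : ∀ s ∈ S, ‖b.1 s - b'.1 s‖ ≤ ε/2 := by
      intro s hs
      have := hb'U s (subset_closure hs)
      rw [dist_eq_norm] at this
      exact this.le
    have hbound := cocycle_norm_le S hSsymm hSgen ρ (fun g => b.1 g - b'.1 g)
      (hdiff b b') hC
    obtain ⟨K, hKcpt, hK⟩ := hb'A (ε/2) (half_pos hε)
    refine ⟨K, hKcpt, fun g hg => ?_⟩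
    have h1 : ‖b.1 g‖ ≤ ‖b.1 g - b'.1 g‖ + ‖b'.1 g‖ := by
      have := norm_add_le (b.1 g - b'.1 g) (b'.1 g)
      simpa using this
    have h2 := hbound g
    have h3 := hK g hg
    have hw : (0:ℝ) ≤ (wordLength S g : ℝ) := Nat.cast_nonneg _
    calc ‖b.1 g‖ ≤ (wordLength S g : ℝ) * (ε/2) + ε/2 * (wordLength S g : ℝ) := by linarith
      _ = ε * (wordLength S g : ℝ) := by ring
  · -- closed under addition
    intro b₁ b₂ h₁ h₂ ε hε
    obtain ⟨K₁, hK₁, hA₁⟩ := h₁ (ε/2) (half_pos hε)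
    obtain ⟨K₂, hK₂, hA₂⟩ := h₂ (ε/2) (half_pos hε)
    refine ⟨K₁ ∪ K₂, hK₁.union hK₂, fun g hg => ?_⟩
    have hg₁ : g ∉ K₁ := fun h => hg (Set.mem_union_left _ h)
    have hg₂ : g ∉ K₂ := fun h => hg (Set.mem_union_right _ h)
    have h1 := hA₁ g hg₁
    have h2 := hA₂ g hg₂
    simp only [ContinuousMap.add_apply]
    calc ‖b₁.1 g + b₂.1 g‖ ≤ ‖b₁.1 g‖ + ‖b₂.1 g‖ := norm_add_le _ _
      _ ≤ ε/2 * (wordLength S g : ℝ) + ε/2 * (wordLength S g : ℝ) := add_le_add h1 h2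
      _ = ε * (wordLength S g : ℝ) := by ring
  · -- closed under scalar multiplication
    intro c b h ε hε
    have hc1 : (0:ℝ) < ‖c‖ + 1 := by positivity
    obtain ⟨K, hK, hA⟩ := h (ε/(‖c‖+1)) (by positivity)
    refine ⟨K, hK, fun g hg => ?_⟩
    have h1 := hA g hg
    have hw : (0:ℝ) ≤ (wordLength S g : ℝ) := Nat.cast_nonneg _
    have hcn : (0:ℝ) ≤ ‖c‖ := norm_nonneg c
    simp only [ContinuousMap.smul_apply, norm_smul]
    have h2 : ‖c‖ * ‖b.1 g‖ ≤ ‖c‖ * (ε/(‖c‖+1) * (wordLength S g : ℝ)) :=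
      mul_le_mul_of_nonneg_left h1 hcn
    have h3 : ‖c‖ * (ε/(‖c‖+1) * (wordLength S g : ℝ)) ≤ ε * (wordLength S g : ℝ) := by
      rw [div_mul_eq_mul_div, mul_div_assoc']
      rw [div_le_iff₀ hc1]
      nlinarith
    linarith
  · -- zero has sublinear growth
    intro ε hε
    refine ⟨∅, isCompact_empty, fun g _ => ?_⟩
    have hw : (0:ℝ) ≤ (wordLength S g : ℝ) := Nat.cast_nonneg _
    simp only [ContinuousMap.zero_apply, norm_zero]
    positivity
  · -- openness of lin
    rw [isOpen_iff_mem_nhds]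
    intro b hb
    obtain ⟨M, hM, K, hK, hbd⟩ := hb
    have hδ : (0:ℝ) < 1/(2*M) := by positivity
    have hU : (Subtype.val ⁻¹' {f : C(G, H) | ∀ x ∈ closure S, dist (b.1 x) (f x) < 1/(2*M)}
        : Set (Z1 ρ)) ∈ 𝓝 b :=
      continuous_subtype_val.continuousAt.preimage_mem_nhds
        (mem_nhds_compact_aux b.1 (closure S) hScpt hδ)
    refine Filter.mem_of_superset hU ?_
    intro b' hb'
    have hC : ∀ s ∈ S, ‖b.1 s - b'.1 s‖ ≤ 1/(2*M) := by
      intro s hs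
      have := hb' s (subset_closure hs)
      rw [dist_eq_norm] at this
      exact this.le
    have hbound := cocycle_norm_le S hSsymm hSgen ρ (fun g => b.1 g - b'.1 g)
      (hdiff b b') hC
    refine ⟨2*M, by positivity, K, hK, fun g hg => ?_⟩
    have h1 := hbd g hg
    have h2 := hbound g
    have h3 : ‖b.1 g‖ - ‖b'.1 g‖ ≤ ‖b.1 g - b'.1 g‖ := norm_sub_norm_le _ _
    have hw : (0:ℝ) ≤ (wordLength S g : ℝ) := Nat.cast_nonneg _
    have h4 : 2*M*‖b.1 g - b'.1 g‖ ≤ (wordLength S g : ℝ) := by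
      have h5 : 2*M*‖b.1 g - b'.1 g‖ ≤ 2*M*((wordLength S g : ℝ) * (1/(2*M))) :=
        mul_le_mul_of_nonneg_left h2 (by positivity)
      have h6 : 2*M*((wordLength S g : ℝ) * (1/(2*M))) = (wordLength S g : ℝ) := by
        field_simp
      linarith
    nlinarith [mul_le_mul_of_nonneg_left h3 (by positivity : (0:ℝ) ≤ 2*M)]
end
end

section
/- Let G be a locally compact, compactly generated amenable group admitting a controlled Følner sequence (Fₙ) with respect to a compact generating set S. Let π be a continuous unitary representation of G, b ∈ Z¹(G,π), α the associated affine action, and vₙ = (1/μ(Fₙ)) ∫_{Fₙ} b(g) dμ(g). Then the following are equivalent: (1) b is an almost coboundary; (2) b has sublinear growth, ‖b(g)‖ ≺ |g|_S; (3) (vₙ) is a sequence of almost fixed points for α, i.e. sup_{s∈S} ‖α(s)vₙ − vₙ‖ → 0. -/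
open MeasureTheory Filter Topology
open scoped BigOperators symmDiff

noncomputable section

/-- `ε_F = sup_{s ∈ S} μ(sF Δ F)/μ(F)`. -/
def folnerConstant {G : Type*} [Group G] [MeasurableSpace G] (μ : Measure G)
    (S F : Set G) : ℝ :=
  sSup ((fun s => (μ (((fun x => s * x) '' F) ∆ F)).toReal / (μ F).toReal) '' S)

/-- `v_F = (1/μ(F)) ∫_F b dμ`. -/
def folnerAverage {G : Type*} [Group G] [MeasurableSpace G]
    {H : Type*} [NormedAddCommGroup H] [InnerProductSpace ℂ H] [CompleteSpace H]
    (μ : Measure G) (b : G → H) (F : Set G) : H :=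
  (μ F).toReal⁻¹ • ∫ g in F, b g ∂μ

/-- The set of coboundaries `g ↦ v - π(g)v`, viewed inside `C(G,H)` (whose compact-open
topology is the topology of uniform convergence on compact subsets). -/
def coboundaries {G H : Type*} [Group G] [TopologicalSpace G] [NormedAddCommGroup H]
    [InnerProductSpace ℂ H] (ρ : G →* (H ≃ₗᵢ[ℂ] H)) : Set C(G, H) :=
  {f | ∃ v : H, ∀ g : G, f g = v - ρ g v}

section AuxLemmas

variable {G : Type*} [Group G] {H : Type*} [NormedAddCommGroup H] [InnerProductSpace ℂ H]

lemma rho_real_smul (e : H ≃ₗᵢ[ℂ] H) (r : ℝ) (x : H) : e (r • x) = r • e x := by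
  have h : r • x = (r • (1 : ℂ)) • x := by rw [smul_assoc, one_smul]
  have h2 : r • e x = (r • (1 : ℂ)) • e x := by rw [smul_assoc, one_smul]
  rw [h, h2, _root_.map_smul]

lemma cocycle_one (ρ : G →* (H ≃ₗᵢ[ℂ] H)) (h : G → H)
    (hc : ∀ g k : G, h (g * k) = ρ g (h k) + h g) : h 1 = 0 := by
  have h1 := hc 1 1
  rw [one_mul, map_one] at h1
  simpa using h1

lemma cocycle_list_bound (ρ : G →* (H ≃ₗᵢ[ℂ] H)) (h : G → H)
    (hc : ∀ g k : G, h (g * k) = ρ g (h k) + h g) {S : Set G} {δ : ℝ}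
    (hδ : ∀ s ∈ S, ‖h s‖ ≤ δ) :
    ∀ l : List G, (∀ x ∈ l, x ∈ S) → ‖h l.prod‖ ≤ (l.length : ℝ) * δ := by
  intro l
  induction l with
  | nil => intro _; simp [cocycle_one ρ h hc]
  | cons a t ih =>
    intro hmem
    have ha : a ∈ S := hmem a List.mem_cons_self
    have ht : ∀ x ∈ t, x ∈ S := fun x hx => hmem x (List.mem_cons_of_mem a hx)
    rw [List.prod_cons, hc a t.prod]
    calc ‖ρ a (h t.prod) + h a‖ ≤ ‖ρ a (h t.prod)‖ + ‖h a‖ := norm_add_le _ _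
      _ = ‖h t.prod‖ + ‖h a‖ := by rw [(ρ a).norm_map]
      _ ≤ (t.length : ℝ) * δ + δ := add_le_add (ih ht) (hδ a ha)
      _ = ((a :: t).length : ℝ) * δ := by rw [List.length_cons]; push_cast; ring

lemma exists_min_word (S : Set G) (hSsymm : S⁻¹ = S) (hSgen : Subgroup.closure S = ⊤)
    (g : G) : ∃ l : List G, (∀ x ∈ l, x ∈ S) ∧ l.prod = g ∧ l.length = wordLength S g := by
  have hg : g ∈ Submonoid.closure S := by
    have h1 : g ∈ (Subgroup.closure S).toSubmonoid := by rw [hSgen]; trivial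
    rwa [Subgroup.closure_toSubmonoid, hSsymm, Set.union_self] at h1
  obtain ⟨l, hl, hlp⟩ := Submonoid.exists_list_of_mem_closure hg
  have hne : {n : ℕ | ∃ l : List G, l.length = n ∧ (∀ x ∈ l, x ∈ S) ∧ l.prod = g}.Nonempty :=
    ⟨l.length, l, rfl, hl, hlp⟩
  obtain ⟨l', hlen, hmem, hprod⟩ := Nat.sInf_mem hne
  exact ⟨l', hmem, hprod, hlen⟩

lemma cocycle_word_bound (ρ : G →* (H ≃ₗᵢ[ℂ] H)) (h : G → H)
    (hc : ∀ g k : G, h (g * k) = ρ g (h k) + h g) {S : Set G}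
    (hSsymm : S⁻¹ = S) (hSgen : Subgroup.closure S = ⊤) {δ : ℝ}
    (hδ : ∀ s ∈ S, ‖h s‖ ≤ δ) (g : G) :
    ‖h g‖ ≤ (wordLength S g : ℝ) * δ := by
  obtain ⟨l, hmem, hprod, hlen⟩ := exists_min_word S hSsymm hSgen g
  have := cocycle_list_bound ρ h hc hδ l hmem
  rwa [hprod, hlen] at this

lemma prod_mem_compact [TopologicalSpace G] [IsTopologicalGroup G]
    {S : Set G} (hS : IsCompact S) (r : ℕ) :
    ∃ K : Set G, IsCompact K ∧ ∀ l : List G, (∀ x ∈ l, x ∈ S) → l.length ≤ r → l.prod ∈ K := by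
  induction r with
  | zero =>
    refine ⟨{1}, isCompact_singleton, fun l _ hl => ?_⟩
    rw [Nat.le_zero, List.length_eq_zero_iff] at hl
    simp [hl]
  | succ r ih =>
    obtain ⟨K, hK, hmem⟩ := ih
    refine ⟨K ∪ (fun p : G × G => p.1 * p.2) '' (S ×ˢ K),
      hK.union ((hS.prod hK).image continuous_mul), ?_⟩
    intro l hl hlen
    cases l with
    | nil => exact Or.inl (by simpa using hmem [] (by simp) (by simp))
    | cons a t =>
      refine Or.inr ⟨(a, t.prod), ⟨hl a List.mem_cons_self,
        hmem t (fun x hx => hl x (List.mem_cons_of_mem a hx)) ?_⟩, rfl⟩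
      simpa using Nat.succ_le_succ_iff.mp hlen

lemma integrableOn_of_compactClosure {G : Type*} [TopologicalSpace G] [MeasurableSpace G]
    [OpensMeasurableSpace G] (μ : Measure G) {A : Set G} (hAm : MeasurableSet A)
    (hAfin : μ A < ⊤) (hAc : IsCompact (closure A)) {f : G → H} (hf : Continuous f) :
    IntegrableOn f A μ := by
  obtain ⟨C, hC⟩ := hAc.exists_bound_of_continuousOn hf.continuousOn
  have hsm : AEStronglyMeasurable f (μ.restrict (closure A)) :=
    hf.continuousOn.aestronglyMeasurable_of_isCompact hAc isClosed_closure.measurableSet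
  refine ⟨hsm.mono_measure (Measure.restrict_mono subset_closure le_rfl), ?_⟩
  apply HasFiniteIntegral.restrict_of_bounded (C := C) hAfin
  filter_upwards [ae_restrict_mem hAm] with x hx using hC x (subset_closure hx)

end AuxLemmas

/-- For groups with a controlled Følner sequence, the following are equivalent for a
1-cocycle `b` : (1) `b` is an almost coboundary; (2) `b` has sublinear growth; (3) the
Følner averages of `b` form a sequence of almost fixed points of the affine action. -/


theorem controlled_folner_tfae
    (G : Type*) [Group G] [TopologicalSpace G] [IsTopologicalGroup G] [LocallyCompactSpace G]
    [MeasurableSpace G] [BorelSpace G] (μ : Measure G) [μ.IsHaarMeasure]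
    (S : Set G) (hScpt : IsCompact S) (hSsymm : S⁻¹ = S) (hSgen : Subgroup.closure S = ⊤)
    -- a controlled Følner sequence:
    (F : ℕ → Set G) (hFmeas : ∀ n, MeasurableSet (F n))
    (hFbdd : ∀ n, IsCompact (closure (F n)))
    (hFpos : ∀ n, 0 < μ (F n)) (hFfin : ∀ n, μ (F n) < ⊤)
    (hFol : Tendsto (fun n => folnerConstant μ S (F n)) atTop (𝓝 0))
    (hctrl : ∃ c > (0:ℝ), ∀ n, ∀ g ∈ F n,
      (wordLength S g : ℝ) * folnerConstant μ S (F n) ≤ c)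
    -- a 1-cocycle `b` for a continuous unitary representation `ρ` :
    (H : Type*) [NormedAddCommGroup H] [InnerProductSpace ℂ H] [CompleteSpace H]
    (ρ : G →* (H ≃ₗᵢ[ℂ] H)) (hρ : ∀ v : H, Continuous fun g => ρ g v)
    (b : C(G, H)) (hb : ∀ g h : G, b (g * h) = ρ g (b h) + b g) :
    (b ∈ closure (coboundaries ρ) ↔
      Prec (fun g => ‖b g‖) (fun g => (wordLength S g : ℝ))) ∧
    (b ∈ closure (coboundaries ρ) ↔
      ∀ δ > (0:ℝ), ∃ N : ℕ, ∀ n ≥ N, ∀ s ∈ S,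
        ‖(ρ s (folnerAverage μ b (F n)) + b s) - folnerAverage μ b (F n)‖ ≤ δ) := by
  classical
  obtain ⟨c, hc_pos, hcontrol⟩ := hctrl
  by_cases hSne : S.Nonempty
  · -- main case
    -- basic facts
    have hbcoc : ∀ g k : G, b (g * k) = ρ g (b k) + b g := hb
    have hm : ∀ n, (0:ℝ) < (μ (F n)).toReal :=
      fun n => ENNReal.toReal_pos (hFpos n).ne' (hFfin n).ne
    -- ratio bound
    have hratio : ∀ n, ∀ s ∈ S,
        (μ (((fun x => s * x) '' F n) ∆ F n)).toReal / (μ (F n)).toReal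
          ≤ folnerConstant μ S (F n) := by
      intro n s hs
      have hbdd : BddAbove
          ((fun s => (μ (((fun x => s * x) '' F n) ∆ F n)).toReal / (μ (F n)).toReal) '' S) := by
        refine ⟨2, ?_⟩
        rintro x ⟨t, ht, rfl⟩
        have h1 : μ (((fun x => t * x) '' F n) ∆ F n) ≤ 2 * μ (F n) := by
          calc μ (((fun x => t * x) '' F n) ∆ F n)
              ≤ μ (((fun x => t * x) '' F n) ∪ F n) := measure_mono Set.symmDiff_subset_union
            _ ≤ μ ((fun x => t * x) '' F n) + μ (F n) := measure_union_le _ _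
            _ = 2 * μ (F n) := by rw [Set.image_mul_left, measure_preimage_mul]; ring
        have h2 : (μ (((fun x => t * x) '' F n) ∆ F n)).toReal ≤ 2 * (μ (F n)).toReal := by
          have h3 := ENNReal.toReal_mono
            (ENNReal.mul_ne_top (by norm_num) (hFfin n).ne) h1
          rwa [ENNReal.toReal_mul, ENNReal.toReal_ofNat] at h3
        show (μ (((fun x => t * x) '' F n) ∆ F n)).toReal / (μ (F n)).toReal ≤ 2
        rw [div_le_iff₀ (hm n)]
        linarith
      exact le_csSup hbdd ⟨s, hs, rfl⟩
    have hεnn : ∀ n, 0 ≤ folnerConstant μ S (F n) := by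
      intro n
      apply Real.sSup_nonneg
      rintro x ⟨t, ht, rfl⟩
      positivity
    -- key integral estimate
    have key : ∀ n : ℕ, ∀ s ∈ S, ∀ B : ℝ, 0 ≤ B →
        (∀ x ∈ ((fun x => s * x) '' F n) \ F n, ‖b x‖ ≤ B) →
        (∀ x ∈ F n \ ((fun x => s * x) '' F n), ‖b x‖ ≤ B) →
        ‖(ρ s (folnerAverage μ b (F n)) + b s) - folnerAverage μ b (F n)‖
          ≤ B * folnerConstant μ S (F n) := by
      intro n s hs B hB hB1 hB2
      set A := (fun x => s * x) '' F n with hA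
      have hAmeas : MeasurableSet A := by
        rw [hA, Set.image_mul_left]
        exact (hFmeas n).preimage (measurable_const_mul _)
      have hAμ : μ A = μ (F n) := by rw [hA, Set.image_mul_left, measure_preimage_mul]
      have hAclos : IsCompact (closure A) := by
        have h1 : closure A = (fun x => s * x) '' closure (F n) :=
          ((Homeomorph.mulLeft s).image_closure (F n)).symm
        rw [h1]
        exact (hFbdd n).image (continuous_mul_left s)
      have hIF : IntegrableOn (⇑b) (F n) μ :=
        integrableOn_of_compactClosure μ (hFmeas n) (hFfin n) (hFbdd n) b.continuous
      have hIA : IntegrableOn (⇑b) A μ :=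
        integrableOn_of_compactClosure μ hAmeas (hAμ ▸ hFfin n) hAclos b.continuous
      set L := (ρ s).toLinearIsometry.toContinuousLinearMap with hL
      have hLapp : ∀ x : H, L x = ρ s x := fun x => rfl
      have hchg : ∫ g in A, b g ∂μ = ∫ g in F n, b (s * g) ∂μ :=
        (measurePreserving_mul_left μ s).setIntegral_image_emb
          (MeasurableEquiv.mulLeft s).measurableEmbedding _ _
      have hLint : ∫ g in F n, ρ s (b g) ∂μ = ρ s (∫ g in F n, b g ∂μ) := by
        have h1 := L.integral_comp_comm hIF
        simpa only [hLapp] using h1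
      have hsum : ∫ g in F n, b (s * g) ∂μ
          = ρ s (∫ g in F n, b g ∂μ) + (μ (F n)).toReal • b s := by
        have h1 : (fun g => b (s * g)) = fun g => ρ s (b g) + b s := by
          funext g; exact hb s g
        rw [show (∫ g in F n, b (s * g) ∂μ) = ∫ g in F n, (ρ s (b g) + b s) ∂μ by
          rw [h1]]
        rw [integral_add _ (integrableOn_const (C := b s) (hFfin n).ne enorm_ne_top)]
        · rw [hLint, setIntegral_const]; rfl
        · have h2 := L.integrable_comp hIF
          simpa only [hLapp] using h2
      have hexp : (ρ s (folnerAverage μ b (F n)) + b s) - folnerAverage μ b (F n)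
          = (μ (F n)).toReal⁻¹ • ((∫ g in A, b g ∂μ) - ∫ g in F n, b g ∂μ) := by
        rw [hchg, hsum, smul_sub, smul_add, smul_smul,
          inv_mul_cancel₀ (hm n).ne', one_smul]
        show ρ s (folnerAverage μ b (F n)) + b s - folnerAverage μ b (F n)
          = ((μ (F n)).toReal⁻¹ • ρ s (∫ g in F n, b g ∂μ) + b s) - folnerAverage μ b (F n)
        rw [show folnerAverage μ (⇑b) (F n) = (μ (F n)).toReal⁻¹ • ∫ g in F n, b g ∂μ from rfl,
          rho_real_smul]
      rw [hexp]
      have hsplit : (∫ g in A, b g ∂μ) - ∫ g in F n, b g ∂μ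
          = (∫ g in A \ F n, b g ∂μ) - ∫ g in F n \ A, b g ∂μ := by
        have h1 := integral_inter_add_diff (μ := μ) (f := ⇑b) (s := A) (t := F n)
          (hFmeas n) hIA
        have h2 := integral_inter_add_diff (μ := μ) (f := ⇑b) (s := F n) (t := A)
          hAmeas hIF
        rw [Set.inter_comm] at h2
        rw [← h1, ← h2]
        abel
      rw [hsplit]
      have hfinA : μ (A \ F n) < ⊤ :=
        (measure_mono Set.diff_subset).trans_lt (hAμ ▸ hFfin n)
      have hfinF : μ (F n \ A) < ⊤ :=
        (measure_mono Set.diff_subset).trans_lt (hFfin n)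
      have hn1 : ‖∫ g in A \ F n, b g ∂μ‖ ≤ B * (μ (A \ F n)).toReal :=
        norm_setIntegral_le_of_norm_le_const hfinA hB1
      have hn2 : ‖∫ g in F n \ A, b g ∂μ‖ ≤ B * (μ (F n \ A)).toReal :=
        norm_setIntegral_le_of_norm_le_const hfinF hB2
      have hμΔ : (μ (A ∆ F n)).toReal = (μ (A \ F n)).toReal + (μ (F n \ A)).toReal := by
        rw [Set.symmDiff_def, measure_union disjoint_sdiff_sdiff ((hFmeas n).diff hAmeas),
          ENNReal.toReal_add hfinA.ne hfinF.ne]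
      calc ‖(μ (F n)).toReal⁻¹ • ((∫ g in A \ F n, b g ∂μ) - ∫ g in F n \ A, b g ∂μ)‖
          = (μ (F n)).toReal⁻¹ * ‖(∫ g in A \ F n, b g ∂μ) - ∫ g in F n \ A, b g ∂μ‖ := by
            rw [norm_smul, Real.norm_eq_abs, abs_of_nonneg (inv_nonneg.mpr (hm n).le)]
        _ ≤ (μ (F n)).toReal⁻¹ * (B * (μ (A \ F n)).toReal + B * (μ (F n \ A)).toReal) := by
            apply mul_le_mul_of_nonneg_left _ (inv_nonneg.mpr (hm n).le)
            exact (norm_sub_le _ _).trans (add_le_add hn1 hn2)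
        _ = B * ((μ (A ∆ F n)).toReal / (μ (F n)).toReal) := by
            rw [hμΔ]; field_simp
        _ ≤ B * folnerConstant μ S (F n) :=
            mul_le_mul_of_nonneg_left (hratio n s hs) hB
    -- (1) → (2)
    have h12 : b ∈ closure (coboundaries ρ) →
        Prec (fun g => ‖b g‖) (fun g => (wordLength S g : ℝ)) := by
      intro hcl ε hε
      have basis := ContinuousMap.hasBasis_compactConvergenceUniformity (α := G) (β := H)
      obtain ⟨f, hfco, hfclose⟩ :=
        (mem_closure_iff_nhds_basis (nhds_basis_uniformity' basis)).mp hcl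
          (S, {p : H × H | dist p.1 p.2 < ε / 2})
          ⟨hScpt, Metric.dist_mem_uniformity (by positivity)⟩
      obtain ⟨v, hv⟩ := hfco
      set h : G → H := fun g => b g - (v - ρ g v) with hhdef
      have hcoc : ∀ g k : G, h (g * k) = ρ g (h k) + h g := by
        intro g k
        simp only [hhdef]
        rw [hb g k, map_mul ρ]
        simp only [LinearIsometryEquiv.coe_mul, Function.comp_apply, map_sub]
        abel
      have hbound : ∀ s ∈ S, ‖h s‖ ≤ ε / 2 := by
        intro t ht
        have h1 : dist (b t) (f t) < ε / 2 := hfclose t ht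
        rw [hv t] at h1
        rw [hhdef]
        calc ‖b t - (v - ρ t v)‖ = dist (b t) (v - ρ t v) := (dist_eq_norm _ _).symm
          _ ≤ ε / 2 := h1.le
      have hlin : ∀ g : G, ‖h g‖ ≤ (wordLength S g : ℝ) * (ε / 2) :=
        cocycle_word_bound ρ h hcoc hSsymm hSgen hbound
      set r := ⌈(2 * ‖v‖) / (ε / 2)⌉₊ with hr
      obtain ⟨K, hKc, hKmem⟩ := prod_mem_compact hScpt r
      refine ⟨K, hKc, fun g hg => ?_⟩
      have hgr : (r : ℝ) < (wordLength S g : ℝ) := by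
        by_contra hle
        push_neg at hle
        have h1 : wordLength S g ≤ r := by exact_mod_cast hle
        obtain ⟨l, hlmem, hlprod, hllen⟩ := exists_min_word S hSsymm hSgen g
        exact hg (hlprod ▸ hKmem l hlmem (hllen ▸ h1))
      have h2v : 2 * ‖v‖ ≤ (ε / 2) * (wordLength S g : ℝ) := by
        have h1 : (2 * ‖v‖) / (ε / 2) ≤ (r : ℝ) := Nat.le_ceil _
        have h2 := h1.trans hgr.le
        rw [div_le_iff₀ (by positivity)] at h2
        linarith
      calc ‖b g‖ = ‖h g + (v - ρ g v)‖ := by simp only [hhdef]; congr 1; abel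
        _ ≤ ‖h g‖ + ‖v - ρ g v‖ := norm_add_le _ _
        _ ≤ (wordLength S g : ℝ) * (ε / 2) + (‖v‖ + ‖ρ g v‖) :=
            add_le_add (hlin g) ((norm_sub_le _ _))
        _ = (wordLength S g : ℝ) * (ε / 2) + 2 * ‖v‖ := by rw [(ρ g).norm_map]; ring
        _ ≤ (wordLength S g : ℝ) * (ε / 2) + (ε / 2) * (wordLength S g : ℝ) := by linarith
        _ = ε * (wordLength S g : ℝ) := by ring
    -- (2) → (3)
    have h23 : Prec (fun g => ‖b g‖) (fun g => (wordLength S g : ℝ)) →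
        ∀ δ > (0:ℝ), ∃ N : ℕ, ∀ n ≥ N, ∀ s ∈ S,
          ‖(ρ s (folnerAverage μ b (F n)) + b s) - folnerAverage μ b (F n)‖ ≤ δ := by
      intro hprec δ hδ
      obtain ⟨M, hM⟩ := hScpt.exists_bound_of_continuousOn b.continuous.continuousOn
      set M0 := max M 0 with hM0def
      have hM0n : (0:ℝ) ≤ M0 := le_max_right _ _
      have hMb : ∀ t ∈ S, ‖b t‖ ≤ M0 := fun t ht => (hM t ht).trans (le_max_left _ _)
      obtain ⟨K, hKc, hKb⟩ := hprec (δ / (2 * c)) (by positivity)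
      obtain ⟨C, hC⟩ := hKc.exists_bound_of_continuousOn b.continuous.continuousOn
      set C0 := max C 0 with hC0def
      have hC0n : (0:ℝ) ≤ C0 := le_max_right _ _
      have hCb : ∀ g : G, ‖b g‖ ≤ (δ / (2 * c)) * (wordLength S g : ℝ) + C0 := by
        intro g
        have hw : (0:ℝ) ≤ (δ / (2 * c)) * (wordLength S g : ℝ) := by positivity
        by_cases hgK : g ∈ K
        · have := (hC g hgK).trans (le_max_left C 0)
          linarith
        · have := hKb g hgK
          linarith
      obtain ⟨N, hN⟩ := Metric.tendsto_atTop.mp hFol (δ / (2 * (C0 + M0 + 1))) (by positivity)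
      refine ⟨N, fun n hn s hs => ?_⟩
      have hεlt : folnerConstant μ S (F n) < δ / (2 * (C0 + M0 + 1)) := by
        have := hN n hn
        rwa [Real.dist_eq, sub_zero, abs_of_nonneg (hεnn n)] at this
      rcases eq_or_lt_of_le (hεnn n) with hε0 | hε0
      · -- Følner constant is zero
        obtain ⟨D, hD⟩ := (hFbdd n).exists_bound_of_continuousOn b.continuous.continuousOn
        set B := max D 0 + M0 with hBdef
        have hBn : (0:ℝ) ≤ B := by
          have : (0:ℝ) ≤ max D 0 := le_max_right _ _
          linarith
        have hDb : ∀ y ∈ F n, ‖b y‖ ≤ max D 0 :=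
          fun y hy => (hD y (subset_closure hy)).trans (le_max_left _ _)
        have h1 : ∀ x ∈ ((fun x => s * x) '' F n) \ F n, ‖b x‖ ≤ B := by
          rintro x ⟨⟨y, hy, rfl⟩, -⟩
          rw [hb s y]
          calc ‖ρ s (b y) + b s‖ ≤ ‖ρ s (b y)‖ + ‖b s‖ := norm_add_le _ _
            _ = ‖b y‖ + ‖b s‖ := by rw [(ρ s).norm_map]
            _ ≤ max D 0 + M0 := add_le_add (hDb y hy) (hMb s hs)
        have h2 : ∀ x ∈ F n \ ((fun x => s * x) '' F n), ‖b x‖ ≤ B := by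
          rintro x ⟨hx, -⟩
          have := hDb x hx
          linarith
        have := key n s hs B hBn h1 h2
        rw [← hε0, mul_zero] at this
        linarith
      · -- positive Følner constant
        set εn := folnerConstant μ S (F n) with hεdef
        have hwordF : ∀ y ∈ F n, (wordLength S y : ℝ) ≤ c / εn := by
          intro y hy
          rw [le_div_iff₀ hε0]
          exact hcontrol n y hy
        have hbF : ∀ y ∈ F n, ‖b y‖ ≤ (δ / (2 * c)) * (c / εn) + C0 := by
          intro y hy
          refine (hCb y).trans (add_le_add ?_ le_rfl)
          exact mul_le_mul_of_nonneg_left (hwordF y hy) (by positivity)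
        set B := (δ / (2 * c)) * (c / εn) + C0 + M0 with hBdef
        have hBn : (0:ℝ) ≤ B := by
          have h0 : (0:ℝ) ≤ (δ / (2 * c)) * (c / εn) := by positivity
          simp only [hBdef]; linarith
        have h1 : ∀ x ∈ ((fun x => s * x) '' F n) \ F n, ‖b x‖ ≤ B := by
          rintro x ⟨⟨y, hy, rfl⟩, -⟩
          rw [hb s y]
          calc ‖ρ s (b y) + b s‖ ≤ ‖ρ s (b y)‖ + ‖b s‖ := norm_add_le _ _
            _ = ‖b y‖ + ‖b s‖ := by rw [(ρ s).norm_map]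
            _ ≤ (δ / (2 * c)) * (c / εn) + C0 + M0 := add_le_add (hbF y hy) (hMb s hs)
        have h2 : ∀ x ∈ F n \ ((fun x => s * x) '' F n), ‖b x‖ ≤ B := by
          rintro x ⟨hx, -⟩
          have := hbF x hx
          simp only [hBdef]
          linarith
        have hkey := key n s hs B hBn h1 h2
        have hBε : B * εn ≤ δ := by
          have hεne : εn ≠ 0 := ne_of_gt hε0
          have hexp : B * εn = δ / 2 + (C0 + M0) * εn := by
            simp only [hBdef]
            field_simp
            ring
          have h4 : (C0 + M0) * εn ≤ (C0 + M0 + 1) * εn := by nlinarith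
          have h5 : (C0 + M0 + 1) * εn ≤ (C0 + M0 + 1) * (δ / (2 * (C0 + M0 + 1))) :=
            mul_le_mul_of_nonneg_left hεlt.le (by linarith)
          have h6 : (C0 + M0 + 1) * (δ / (2 * (C0 + M0 + 1))) = δ / 2 := by
            field_simp
          have h7 : (C0 + M0) * εn ≤ δ / 2 := le_trans h4 (h5.trans_eq h6)
          rw [hexp]
          linarith
        exact hkey.trans hBε
    -- (3) → (1)
    have h31 : (∀ δ > (0:ℝ), ∃ N : ℕ, ∀ n ≥ N, ∀ s ∈ S,
          ‖(ρ s (folnerAverage μ b (F n)) + b s) - folnerAverage μ b (F n)‖ ≤ δ) →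
        b ∈ closure (coboundaries ρ) := by
      intro h3
      set v : ℕ → H := fun n => folnerAverage μ b (F n) with hvdef
      set w : ℕ → G → H := fun n g => ρ g (v n) + b g - v n with hwdef
      have hwcoc : ∀ n, ∀ g k : G, w n (g * k) = ρ g (w n k) + w n g := by
        intro n g k
        simp only [hwdef]
        rw [hb g k, map_mul ρ]
        simp only [LinearIsometryEquiv.coe_mul, Function.comp_apply, map_add, map_sub]
        abel
      have hwcont : ∀ n, Continuous (w n) :=
        fun n => ((hρ (v n)).add b.continuous).sub continuous_const
      have hncont : ∀ n, Continuous fun g => ‖w n g‖ := fun n => (hwcont n).norm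
      set δs : ℕ → ℝ := fun n => sSup ((fun s => ‖w n s‖) '' S) with hδsdef
      have hδbdd : ∀ n, BddAbove ((fun s => ‖w n s‖) '' S) :=
        fun n => (hScpt.image (hncont n)).bddAbove
      have hδle : ∀ n, ∀ s ∈ S, ‖w n s‖ ≤ δs n :=
        fun n s hs => le_csSup (hδbdd n) ⟨s, hs, rfl⟩
      have hδnn : ∀ n, 0 ≤ δs n := by
        intro n
        obtain ⟨s0, hs0⟩ := hSne
        exact le_trans (norm_nonneg _) (hδle n s0 hs0)
      have hδ0 : Tendsto δs atTop (𝓝 0) := by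
        rw [Metric.tendsto_atTop]
        intro ε hε
        obtain ⟨N, hN⟩ := h3 (ε / 2) (half_pos hε)
        refine ⟨N, fun n hn => ?_⟩
        have h1 : δs n ≤ ε / 2 := by
          apply csSup_le (hSne.image _)
          rintro x ⟨t, ht, rfl⟩
          exact hN n hn t ht
        rw [Real.dist_eq, sub_zero, abs_of_nonneg (hδnn n)]
        linarith
      have hword : ∀ n (g : G), ‖w n g‖ ≤ (wordLength S g : ℝ) * δs n :=
        fun n => cocycle_word_bound ρ (w n) (hwcoc n) hSsymm hSgen (hδle n)
      -- Baire category argument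
      haveI : Nonempty G := ⟨1⟩
      set Am : ℕ → Set G := fun m => ⋂ n, {g : G | ‖w n g‖ ≤ (m : ℝ) * δs n} with hAmdef
      have hAmclosed : ∀ m, IsClosed (Am m) :=
        fun m => isClosed_iInter fun n => isClosed_le (hncont n) continuous_const
      have hAmcover : ⋃ m, Am m = Set.univ := by
        refine Set.eq_univ_of_forall fun g => Set.mem_iUnion.2 ⟨wordLength S g, ?_⟩
        simp only [hAmdef, Set.mem_iInter, Set.mem_setOf_eq]
        exact fun n => hword n g
      have hAmmem : ∀ (m : ℕ) (x : G), x ∈ Am m → ∀ n, ‖w n x‖ ≤ (m : ℝ) * δs n := by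
        intro m x hx n
        simp only [hAmdef, Set.mem_iInter, Set.mem_setOf_eq] at hx
        exact hx n
      obtain ⟨m, hmne⟩ := nonempty_interior_of_iUnion_of_closed hAmclosed hAmcover
      -- coboundaries converging to b
      set fcb : ℕ → C(G, H) :=
        fun n => ⟨fun g => v n - ρ g (v n), continuous_const.sub (hρ (v n))⟩ with hfcbdef
      have hfcb : ∀ n, fcb n ∈ coboundaries ρ := fun n => ⟨v n, fun g => rfl⟩
      have hdiff : ∀ n (g : G), b g - fcb n g = w n g := by
        intro n g
        simp only [hfcbdef, hwdef, ContinuousMap.coe_mk]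
        abel
      have htend : Tendsto fcb atTop (𝓝 b) := by
        rw [ContinuousMap.tendsto_iff_forall_isCompact_tendstoUniformlyOn]
        intro K hK
        set U : G → Set G := fun g => (fun x => g * x) ⁻¹' interior (Am m) with hUdef
        have hUopen : ∀ g, IsOpen (U g) :=
          fun g => isOpen_interior.preimage (continuous_mul_left g)
        have hKcov : K ⊆ ⋃ g : G, U g := by
          intro k _
          obtain ⟨u, hu⟩ := hmne
          refine Set.mem_iUnion.2 ⟨u * k⁻¹, ?_⟩
          simp only [hUdef, Set.mem_preimage, inv_mul_cancel_right]
          exact hu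
        obtain ⟨t, ht⟩ := hK.elim_finite_subcover U hUopen hKcov
        set q : ℕ := t.sup (wordLength S) with hqdef
        set Cst : ℝ := ((m + q : ℕ) : ℝ) with hCstdef
        have hCstnn : (0:ℝ) ≤ Cst := Nat.cast_nonneg _
        have hKbound : ∀ n, ∀ k ∈ K, ‖w n k‖ ≤ Cst * δs n := by
          intro n k hk
          obtain ⟨g, hgt, hgk⟩ := Set.mem_iUnion₂.mp (ht hk)
          have h1 : g * k ∈ Am m := interior_subset hgk
          have h2 : ‖w n (g * k)‖ ≤ (m : ℝ) * δs n := hAmmem m _ h1 n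
          have h3 : ‖w n g‖ ≤ (wordLength S g : ℝ) * δs n := hword n g
          have h4 : ρ g (w n k) = w n (g * k) - w n g := by
            rw [hwcoc n g k]; abel
          have h5 : ‖w n k‖ ≤ (m : ℝ) * δs n + (wordLength S g : ℝ) * δs n := by
            calc ‖w n k‖ = ‖ρ g (w n k)‖ := ((ρ g).norm_map _).symm
              _ = ‖w n (g * k) - w n g‖ := by rw [h4]
              _ ≤ ‖w n (g * k)‖ + ‖w n g‖ := norm_sub_le _ _
              _ ≤ _ := add_le_add h2 h3
          have h6 : (wordLength S g : ℝ) ≤ (q : ℝ) :=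
            Nat.cast_le.mpr (Finset.le_sup hgt)
          have h7 := hδnn n
          have h8 : (wordLength S g : ℝ) * δs n ≤ (q : ℝ) * δs n :=
            mul_le_mul_of_nonneg_right h6 h7
          simp only [hCstdef]
          push_cast
          linarith
        rw [Metric.tendstoUniformlyOn_iff]
        intro ε hε
        have hCpos : (0:ℝ) < Cst + 1 := by linarith
        have hpos : (0:ℝ) < ε / (Cst + 1) := div_pos hε hCpos
        have hev : ∀ᶠ n in atTop, δs n < ε / (Cst + 1) :=
          hδ0.eventually (gt_mem_nhds hpos)
        filter_upwards [hev] with n hn x hx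
        have h1 : dist (b x) (fcb n x) = ‖w n x‖ := by
          rw [dist_eq_norm, hdiff n x]
        rw [h1]
        have h2 := hKbound n x hx
        have h3 : Cst * δs n ≤ (Cst + 1) * δs n :=
          mul_le_mul_of_nonneg_right (by linarith) (hδnn n)
        have h4 : (Cst + 1) * δs n < (Cst + 1) * (ε / (Cst + 1)) :=
          mul_lt_mul_of_pos_left hn hCpos
        have h5 : (Cst + 1) * (ε / (Cst + 1)) = ε := by
          field_simp
        linarith
      exact mem_closure_of_tendsto htend (Eventually.of_forall hfcb)
    exact ⟨⟨h12, fun h2 => h31 (h23 h2)⟩, ⟨fun h1 => h23 (h12 h1), h31⟩⟩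
  · -- degenerate case : S = ∅, G is trivial
    have hSempty : S = ∅ := Set.not_nonempty_iff_eq_empty.mp hSne
    have hG : ∀ g : G, g = 1 := by
      intro g
      have h1 : g ∈ Subgroup.closure S := by rw [hSgen]; trivial
      rw [hSempty, Subgroup.closure_empty, Subgroup.mem_bot] at h1
      exact h1
    have hb1 : b 1 = 0 := cocycle_one ρ b hb
    have hmem : b ∈ closure (coboundaries ρ) := by
      apply subset_closure
      refine ⟨0, fun g => ?_⟩
      rw [hG g]
      simp [hb1]
    constructor
    · constructor
      · intro _ ε hε
        exact ⟨{1}, isCompact_singleton, fun g hg => absurd (by simp [hG g]) hg⟩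
      · exact fun _ => hmem
    · constructor
      · intro _ δ hδ
        exact ⟨0, fun n _ s hs => absurd hs (by simp [hSempty])⟩
      · exact fun _ => hmem
end
end

section
/- Let G be a locally compact, a-T-menable group. For every proper function f : G → [1,∞) (i.e. for every R there is a compact set outside of which f ≥ R), there exists a continuous, conditionally negative definite, proper function ψ on G such that ψ(g) ≤ f(g) for all g ∈ G. -/
open scoped BigOperators

noncomputable section

/-- A conditionally negative definite function on a group:
`ψ(1) = 0`, `ψ(g⁻¹) = ψ(g)`, and `∑ᵢⱼ λᵢλⱼ ψ(gᵢ⁻¹gⱼ) ≤ 0` whenever `∑ᵢ λᵢ = 0`. -/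
def IsCondNegDef {G : Type*} [Group G] (ψ : G → ℝ) : Prop :=
  ψ 1 = 0 ∧ (∀ g : G, ψ g⁻¹ = ψ g) ∧
  ∀ (n : ℕ) (g : Fin n → G) (lam : Fin n → ℝ), (∑ i, lam i = 0) →
    ∑ i, ∑ j, lam i * lam j * ψ ((g i)⁻¹ * g j) ≤ 0

/-- A function on a topological space is proper if it tends to `∞` at infinity. -/
def IsProperFn {G : Type*} [TopologicalSpace G] (ψ : G → ℝ) : Prop :=
  ∀ R : ℝ, ∃ K : Set G, IsCompact K ∧ ∀ g ∉ K, R ≤ ψ g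

/-- Entrywise powers of a Gram matrix give a positive semidefinite quadratic form. -/
lemma aux_pow_psd {n m : ℕ} (C : Fin m → Fin n → ℝ) (μ : Fin n → ℝ) (k : ℕ) :
    0 ≤ ∑ i, ∑ j, μ i * μ j * (∑ a, C a i * C a j) ^ k := by
  have hpow : ∀ i j : Fin n, (∑ a, C a i * C a j) ^ k
      = ∑ w : Fin k → Fin m, (∏ t, C (w t) i) * (∏ t, C (w t) j) := by
    intro i j
    rw [← Fin.prod_const k (∑ a, C a i * C a j), Finset.prod_univ_sum]
    simp [Finset.prod_mul_distrib]
  calc ∑ i, ∑ j, μ i * μ j * (∑ a, C a i * C a j) ^ k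
      = ∑ p : Fin n × Fin n, μ p.1 * μ p.2 * (∑ a, C a p.1 * C a p.2) ^ k := by
        rw [Fintype.sum_prod_type]
    _ = ∑ p : Fin n × Fin n, ∑ w : Fin k → Fin m,
          (μ p.1 * ∏ t, C (w t) p.1) * (μ p.2 * ∏ t, C (w t) p.2) := by
        refine Finset.sum_congr rfl fun p _ => ?_
        rw [hpow, Finset.mul_sum]
        exact Finset.sum_congr rfl fun w _ => by ring
    _ = ∑ w : Fin k → Fin m, ∑ p : Fin n × Fin n,
          (μ p.1 * ∏ t, C (w t) p.1) * (μ p.2 * ∏ t, C (w t) p.2) := Finset.sum_comm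
    _ = ∑ w : Fin k → Fin m, (∑ i, μ i * ∏ t, C (w t) i) ^ 2 := by
        refine Finset.sum_congr rfl fun w _ => ?_
        rw [sq, Finset.sum_mul_sum, Fintype.sum_prod_type]
    _ ≥ 0 := Finset.sum_nonneg fun w _ => sq_nonneg _

open Matrix in
/-- Entrywise exponential of a symmetric PSD quadratic form is PSD. -/
lemma aux_exp_psd {n : ℕ} (B : Fin n → Fin n → ℝ) (hsymm : ∀ i j, B i j = B j i)
    (hpsd : ∀ μ : Fin n → ℝ, 0 ≤ ∑ i, ∑ j, μ i * μ j * B i j) (μ : Fin n → ℝ) :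
    0 ≤ ∑ i, ∑ j, μ i * μ j * Real.exp (B i j) := by
  obtain ⟨C, hC⟩ : ∃ C : Matrix (Fin n) (Fin n) ℝ, (Matrix.of B) = Cᴴ * C := by
    have key : ∀ A : Matrix (Fin n) (Fin n) ℝ, A.PosSemidef →
        ∃ C : Matrix (Fin n) (Fin n) ℝ, A = Cᴴ * C := by
      intro A hA
      open scoped MatrixOrder Matrix.Norms.L2Operator in
      exact CStarAlgebra.nonneg_iff_eq_star_mul_self.mp hA.nonneg
    apply key
    refine Matrix.posSemidef_iff_dotProduct_mulVec.mpr ⟨?_, ?_⟩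
    · ext i j
      simp [Matrix.conjTranspose_apply, hsymm i j]
    · intro x
      have h := hpsd x
      have : dotProduct (star x) (((Matrix.of B) *ᵥ x))
          = ∑ i, ∑ j, x i * x j * B i j := by
        simp only [dotProduct, Matrix.mulVec, Pi.star_apply, star_trivial,
          Matrix.of_apply, Finset.mul_sum]
        exact Finset.sum_congr rfl fun i _ => Finset.sum_congr rfl fun j _ => by ring
      rw [this]; exact h
  have hB : ∀ i j, B i j = ∑ a, C a i * C a j := by
    intro i j
    have h : (Matrix.of B) i j = (Cᴴ * C) i j := by rw [hC]
    simpa [Matrix.mul_apply, Matrix.conjTranspose_apply] using h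
  have hexp : ∀ i j, μ i * μ j * Real.exp (B i j)
      = ∑' k : ℕ, μ i * μ j * (B i j ^ k / (Nat.factorial k)) := by
    intro i j
    rw [tsum_mul_left]
    congr 1
    rw [Real.exp_eq_exp_ℝ]
    exact congrFun NormedSpace.exp_eq_tsum_div (B i j)
  calc ∑ i, ∑ j, μ i * μ j * Real.exp (B i j)
      = ∑ i, ∑ j, ∑' k : ℕ, μ i * μ j * (B i j ^ k / (Nat.factorial k)) :=
        Finset.sum_congr rfl fun i _ => Finset.sum_congr rfl fun j _ => hexp i j
    _ = ∑' k : ℕ, ∑ i, ∑ j, μ i * μ j * (B i j ^ k / (Nat.factorial k)) := by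
        have hs1 : ∀ i j : Fin n, Summable fun k : ℕ => μ i * μ j * (B i j ^ k / (Nat.factorial k)) :=
          fun i j => (Real.summable_pow_div_factorial (B i j)).mul_left _
        have step1 : ∀ i : Fin n, ∑ j, ∑' k : ℕ, μ i * μ j * (B i j ^ k / (Nat.factorial k))
            = ∑' k : ℕ, ∑ j, μ i * μ j * (B i j ^ k / (Nat.factorial k)) :=
          fun i => (Summable.tsum_finsetSum fun j _ => hs1 i j).symm
        rw [Finset.sum_congr rfl fun i _ => step1 i]
        exact (Summable.tsum_finsetSum fun i _ => summable_sum fun j _ => hs1 i j).symm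
    _ ≥ 0 := by
        refine tsum_nonneg fun k => ?_
        have h := aux_pow_psd C μ k
        have : ∑ i, ∑ j, μ i * μ j * (B i j ^ k / (Nat.factorial k))
            = (∑ i, ∑ j, μ i * μ j * (∑ a, C a i * C a j) ^ k) / (Nat.factorial k) := by
          rw [Finset.sum_div]
          refine Finset.sum_congr rfl fun i _ => ?_
          rw [Finset.sum_div]
          refine Finset.sum_congr rfl fun j _ => ?_
          rw [hB i j]; ring
        rw [this]
        positivity

/-- Schoenberg: `exp (-ψ)` is positive definite when `ψ` is conditionally negative definite. -/
lemma aux_schoenberg {G : Type*} [Group G] {ψ : G → ℝ} (hψ : IsCondNegDef ψ)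
    (n : ℕ) (g : Fin n → G) (lam : Fin n → ℝ) :
    0 ≤ ∑ i, ∑ j, lam i * lam j * Real.exp (-ψ ((g i)⁻¹ * g j)) := by
  obtain ⟨h1, hsym, hquad⟩ := hψ
  set B : Fin n → Fin n → ℝ := fun i j => ψ (g i) + ψ (g j) - ψ ((g i)⁻¹ * g j) with hBdef
  have hψswap : ∀ i j : Fin n, ψ ((g j)⁻¹ * g i) = ψ ((g i)⁻¹ * g j) := by
    intro i j
    rw [← hsym ((g i)⁻¹ * g j)]
    congr 1
    simp [mul_inv_rev]
  have hsymm : ∀ i j, B i j = B j i := by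
    intro i j
    simp only [hBdef, hψswap i j]
    ring
  have hpsd : ∀ μ : Fin n → ℝ, 0 ≤ ∑ i, ∑ j, μ i * μ j * B i j := by
    intro μ
    set s := ∑ i, μ i with hs
    set T := ∑ i, μ i * ψ (g i) with hT
    set A := ∑ i, ∑ j, μ i * μ j * ψ ((g i)⁻¹ * g j) with hA
    have key := hquad (n+1) (Fin.cons 1 g) (Fin.cons (-s) μ)
      (by rw [Fin.sum_cons, hs]; ring)
    have expand : (∑ i : Fin (n+1), ∑ j : Fin (n+1),
        (Fin.cons (-s) μ : Fin (n+1) → ℝ) i * (Fin.cons (-s) μ : Fin (n+1) → ℝ) j *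
          ψ (((Fin.cons 1 g : Fin (n+1) → G) i)⁻¹ * (Fin.cons 1 g : Fin (n+1) → G) j)) = A - s * T - s * T := by
      simp only [Fin.sum_univ_succ, Fin.cons_zero, Fin.cons_succ, inv_one, one_mul, mul_one,
        h1, hsym, mul_zero]
      rw [Finset.sum_add_distrib]
      have e1 : ∑ x, -s * μ x * ψ (g x) = -(s * T) := by
        calc ∑ x, -s * μ x * ψ (g x) = ∑ x, -(s * (μ x * ψ (g x))) :=
              Finset.sum_congr rfl fun x _ => by ring
          _ = -(∑ x, s * (μ x * ψ (g x))) := Finset.sum_neg_distrib _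
          _ = -(s * T) := by rw [hT, Finset.mul_sum]
      have e2 : ∑ x, μ x * -s * ψ (g x) = -(s * T) := by
        calc ∑ x, μ x * -s * ψ (g x) = ∑ x, -(s * (μ x * ψ (g x))) :=
              Finset.sum_congr rfl fun x _ => by ring
          _ = -(∑ x, s * (μ x * ψ (g x))) := Finset.sum_neg_distrib _
          _ = -(s * T) := by rw [hT, Finset.mul_sum]
      rw [e1, e2, ← hA]
      ring
    have hkey : A - s * T - s * T ≤ 0 := expand ▸ key
    have expand2 : ∑ i, ∑ j, μ i * μ j * B i j = s * T + s * T - A := by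
      have e : ∀ i j : Fin n, μ i * μ j * B i j
          = (μ i * ψ (g i)) * μ j + μ i * (μ j * ψ (g j)) - μ i * μ j * ψ ((g i)⁻¹ * g j) := by
        intro i j; simp only [hBdef]; ring
      calc ∑ i, ∑ j, μ i * μ j * B i j
          = ∑ i, (∑ j, (μ i * ψ (g i)) * μ j + ∑ j, μ i * (μ j * ψ (g j))
              - ∑ j, μ i * μ j * ψ ((g i)⁻¹ * g j)) := by
            refine Finset.sum_congr rfl fun i _ => ?_
            rw [← Finset.sum_add_distrib, ← Finset.sum_sub_distrib]
            exact Finset.sum_congr rfl fun j _ => e i j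
        _ = ∑ i, ((μ i * ψ (g i)) * s + μ i * T - ∑ j, μ i * μ j * ψ ((g i)⁻¹ * g j)) := by
            refine Finset.sum_congr rfl fun i _ => ?_
            rw [← Finset.mul_sum, ← Finset.mul_sum, ← hs, ← hT]
        _ = (∑ i, (μ i * ψ (g i)) * s) + (∑ i, μ i * T) - A := by
            rw [← Finset.sum_add_distrib, ← Finset.sum_sub_distrib]
        _ = s * T + s * T - A := by
            rw [← Finset.sum_mul, ← Finset.sum_mul, ← hT, ← hs]
            ring
    rw [expand2]
    linarith
  have hfin : ∑ i, ∑ j, lam i * lam j * Real.exp (-ψ ((g i)⁻¹ * g j))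
      = ∑ i, ∑ j, (lam i * Real.exp (-ψ (g i))) * (lam j * Real.exp (-ψ (g j)))
          * Real.exp (B i j) := by
    refine Finset.sum_congr rfl fun i _ => Finset.sum_congr rfl fun j _ => ?_
    simp only [hBdef, Real.exp_sub, Real.exp_add, Real.exp_neg]
    have hi := Real.exp_ne_zero (ψ (g i))
    have hj := Real.exp_ne_zero (ψ (g j))
    field_simp
  rw [hfin]
  exact aux_exp_psd B hsymm hpsd _

lemma aux_scale_cnd {G : Type*} [Group G] {ψ : G → ℝ} (hψ : IsCondNegDef ψ) {t : ℝ}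
    (ht : 0 < t) : IsCondNegDef (fun g => ψ g / t) := by
  obtain ⟨h1, hsym, hquad⟩ := hψ
  refine ⟨by simp [h1], fun g => by simp [hsym g], fun n g lam hlam => ?_⟩
  have : ∑ i, ∑ j, lam i * lam j * (ψ ((g i)⁻¹ * g j) / t)
      = (∑ i, ∑ j, lam i * lam j * ψ ((g i)⁻¹ * g j)) / t := by
    rw [Finset.sum_div]
    refine Finset.sum_congr rfl fun i _ => ?_
    rw [Finset.sum_div]
    exact Finset.sum_congr rfl fun j _ => by ring
  simp only [this]
  exact div_nonpos_of_nonpos_of_nonneg (hquad n g lam hlam) ht.le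

lemma aux_term_cnd {G : Type*} [Group G] {ψ : G → ℝ} (hψ : IsCondNegDef ψ) {t : ℝ}
    (ht : 0 < t) : IsCondNegDef (fun g => 1 - Real.exp (-(ψ g / t))) := by
  have hscale := aux_scale_cnd hψ ht
  refine ⟨by simp [hψ.1], fun g => by simp [hψ.2.1 g], fun n g lam hlam => ?_⟩
  have hsplit : ∀ i j : Fin n, lam i * lam j * (1 - Real.exp (-(ψ ((g i)⁻¹ * g j) / t)))
      = lam i * lam j - lam i * lam j * Real.exp (-(ψ ((g i)⁻¹ * g j) / t)) := by
    intro i j; ring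
  have h0 : ∑ i, ∑ j, lam i * lam j = 0 := by
    rw [← Finset.sum_mul_sum, hlam, zero_mul]
  calc ∑ i, ∑ j, lam i * lam j * (1 - Real.exp (-(ψ ((g i)⁻¹ * g j) / t)))
      = (∑ i, ∑ j, lam i * lam j)
        - ∑ i, ∑ j, lam i * lam j * Real.exp (-(ψ ((g i)⁻¹ * g j) / t)) := by
        rw [← Finset.sum_sub_distrib]
        refine Finset.sum_congr rfl fun i _ => ?_
        rw [← Finset.sum_sub_distrib]
        exact Finset.sum_congr rfl fun j _ => hsplit i j
    _ ≤ 0 := by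
        rw [h0, zero_sub, neg_nonpos]
        exact aux_schoenberg hscale n g lam

set_option maxHeartbeats 1000000

/-- On an a-T-menable locally compact group, below any proper function `f ≥ 1` there is a
proper continuous conditionally negative definite function. -/
theorem aTmenable_slow_cnd
    (G : Type*) [Group G] [TopologicalSpace G] [IsTopologicalGroup G] [LocallyCompactSpace G]
    -- G is a-T-menable: it has a continuous, proper, conditionally negative definite function
    (hatm : ∃ ψ₀ : G → ℝ, Continuous ψ₀ ∧ (∀ g, 0 ≤ ψ₀ g) ∧ IsCondNegDef ψ₀ ∧
      IsProperFn ψ₀)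
    (f : G → ℝ) (hf1 : ∀ g : G, 1 ≤ f g) (hfproper : IsProperFn f) :
    ∃ ψ : G → ℝ, Continuous ψ ∧ (∀ g, 0 ≤ ψ g) ∧ IsCondNegDef ψ ∧ IsProperFn ψ ∧
      ∀ g : G, ψ g ≤ f g := by
  classical
  obtain ⟨ψ₀, hcont₀, hnn₀, hcnd₀, hprop₀⟩ := hatm
  -- an increasing family of compact sets outside of which `f` is large
  have hK' : ∀ n : ℕ, ∃ K : Set G, IsCompact K ∧ ∀ g ∉ K, (n : ℝ) + 2 ≤ f g := fun n =>
    hfproper ((n : ℝ) + 2)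
  choose K' hK'c hK'f using hK'
  set K : ℕ → Set G := fun n => ⋃ i ∈ Finset.range (n+1), K' i with hKdef
  have hKc : ∀ n, IsCompact (K n) := fun n =>
    (Finset.range (n+1)).isCompact_biUnion fun i _ => hK'c i
  have hKnot : ∀ (n : ℕ) (g : G), g ∉ K n → (n : ℝ) + 2 ≤ f g := by
    intro n g hg
    refine hK'f n g fun hgK' => hg ?_
    exact Set.mem_biUnion (Finset.self_mem_range_succ n) hgK'
  -- monotone bounds for ψ₀ on the compacts K n
  have hbdd : ∀ n : ℕ, ∃ b : ℝ, ∀ g ∈ K n, ψ₀ g ≤ b := by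
    intro n
    obtain ⟨bb, hbb⟩ := ((hKc n).image hcont₀).bddAbove
    exact ⟨bb, fun g hg => hbb (Set.mem_image_of_mem _ hg)⟩
  choose b hb using hbdd
  set M : ℕ → ℝ := fun n => 1 + ∑ i ∈ Finset.range (n+1), max (b i) 0 with hMdef
  have hM1 : ∀ n, 1 ≤ M n := fun n =>
    le_add_of_nonneg_right (Finset.sum_nonneg fun i _ => le_max_right _ _)
  have hM0 : ∀ n, 0 < M n := fun n => lt_of_lt_of_le one_pos (hM1 n)
  have hMb : ∀ (n : ℕ) (g : G), g ∈ K n → ψ₀ g ≤ M n := by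
    intro n g hg
    calc ψ₀ g ≤ b n := hb n g hg
      _ ≤ max (b n) 0 := le_max_left _ _
      _ ≤ ∑ i ∈ Finset.range (n+1), max (b i) 0 :=
          Finset.single_le_sum (fun i _ => le_max_right (b i) 0) (Finset.self_mem_range_succ n)
      _ ≤ M n := le_add_of_nonneg_left one_pos.le
  have hMmono : Monotone M := by
    intro m n h
    simp only [hMdef]
    apply add_le_add le_rfl
    apply Finset.sum_le_sum_of_subset_of_nonneg
    · exact Finset.range_subset_range.mpr (by omega)
    · intro i _ _; exact le_max_right _ _
  -- the scaling parameters
  set t : ℕ → ℝ := fun n => 2^(n+1) * M (n+1) with htdef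
  have ht_pos : ∀ n, 0 < t n := fun n => mul_pos (by positivity) (hM0 _)
  have ht_mono : Monotone t := fun m n h =>
    mul_le_mul (pow_le_pow_right₀ (by norm_num) (by omega)) (hMmono (by omega))
      (hM0 _).le (by positivity)
  have ht_ge : ∀ n, (2:ℝ)^(n+1) ≤ t n := by
    intro n
    nth_rewrite 1 [← mul_one ((2:ℝ)^(n+1))]
    exact mul_le_mul_of_nonneg_left (hM1 _) (by positivity)
  -- the summands
  set term : ℕ → G → ℝ := fun k g => 1 - Real.exp (-(ψ₀ g / t k)) with htermdef
  have hterm_nonneg : ∀ (k : ℕ) (g : G), 0 ≤ term k g := by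
    intro k g
    simp only [htermdef, sub_nonneg]
    have h := Real.exp_le_exp.mpr (neg_nonpos.mpr (div_nonneg (hnn₀ g) (ht_pos k).le))
    simpa using h
  have hterm_le_one : ∀ (k : ℕ) (g : G), term k g ≤ 1 := by
    intro k g
    simp only [htermdef]
    have := Real.exp_pos (-(ψ₀ g / t k))
    linarith
  have hterm_le : ∀ (k : ℕ) (g : G), term k g ≤ ψ₀ g / t k := by
    intro k g
    simp only [htermdef]
    have h := Real.add_one_le_exp (-(ψ₀ g / t k))
    linarith
  have hhalf : ∀ (k : ℕ) (g : G), ψ₀ g ≤ M (k+1) → term k g ≤ (1/2:ℝ)^(k+1) := by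
    intro k g hg
    refine (hterm_le k g).trans ?_
    rw [div_le_iff₀ (ht_pos k)]
    have he : (1/2:ℝ)^(k+1) * t k = M (k+1) := by
      simp only [htdef]
      rw [← mul_assoc, one_div, inv_pow, inv_mul_cancel₀ (by positivity), one_mul]
    rw [he]
    exact hg
  have hsummable : ∀ g : G, Summable fun k => term k g := by
    intro g
    refine Summable.of_nonneg_of_le (fun k => hterm_nonneg k g) (fun k => ?_)
      (((summable_nat_add_iff 1).mpr summable_geometric_two).mul_left (ψ₀ g))
    calc term k g ≤ ψ₀ g / t k := hterm_le k g
      _ ≤ ψ₀ g / 2^(k+1) := div_le_div_of_nonneg_left (hnn₀ g) (by positivity) (ht_ge k)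
      _ = ψ₀ g * (1/2)^(k+1) := by rw [div_eq_mul_inv, one_div, inv_pow]
  set ψ : G → ℝ := fun g => ∑' k, term k g with hψdef
  refine ⟨ψ, ?_, ?_, ?_, ?_, ?_⟩
  · -- Continuity
    rw [continuous_iff_continuousAt]
    intro x
    obtain ⟨C, hCc, hCn⟩ := exists_compact_mem_nhds x
    obtain ⟨Mb, hMbd⟩ : ∃ bb : ℝ, ∀ g ∈ C, ψ₀ g ≤ bb := by
      obtain ⟨bb, hbb⟩ := (hCc.image hcont₀).bddAbove
      exact ⟨bb, fun g hg => hbb (Set.mem_image_of_mem _ hg)⟩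
    have hu : Summable (fun k : ℕ => max Mb 0 * (1/2:ℝ)^(k+1)) :=
      ((summable_nat_add_iff 1).mpr summable_geometric_two).mul_left _
    have htu : TendstoUniformlyOn (fun (s : Finset ℕ) g => ∑ k ∈ s, term k g) ψ
        Filter.atTop C := by
      apply tendstoUniformlyOn_tsum hu
      intro k g hg
      rw [Real.norm_of_nonneg (hterm_nonneg k g)]
      calc term k g ≤ ψ₀ g / t k := hterm_le k g
        _ ≤ max Mb 0 / t k := by
            apply div_le_div_of_nonneg_right ((hMbd g hg).trans (le_max_left _ _)) (ht_pos k).le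
        _ ≤ max Mb 0 / 2^(k+1) :=
            div_le_div_of_nonneg_left (le_max_right Mb 0) (by positivity) (ht_ge k)
        _ = max Mb 0 * (1/2)^(k+1) := by rw [div_eq_mul_inv, one_div, inv_pow]
    have hcc : ContinuousOn ψ C := by
      apply htu.continuousOn
      apply Filter.Eventually.frequently
      filter_upwards with s
      apply Continuous.continuousOn
      apply continuous_finset_sum
      intro k _
      simp only [htermdef]
      exact continuous_const.sub (Real.continuous_exp.comp (hcont₀.div_const _).neg)
    exact hcc.continuousAt hCn
  · -- Nonnegativity
    intro g
    exact tsum_nonneg fun k => hterm_nonneg k g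
  · -- Conditional negative definiteness
    refine ⟨?_, ?_, ?_⟩
    · have h0 : ∀ k : ℕ, term k (1 : G) = 0 := by
        intro k; simp [htermdef, hcnd₀.1]
      simp only [hψdef]
      rw [tsum_congr h0]
      exact tsum_zero
    · intro g
      simp only [hψdef]
      exact tsum_congr fun k => by simp [htermdef, hcnd₀.2.1 g]
    · intro n g lam hlam
      have hterm_cnd : ∀ k : ℕ, ∑ i, ∑ j, lam i * lam j * term k ((g i)⁻¹ * g j) ≤ 0 := by
        intro k
        exact (aux_term_cnd hcnd₀ (ht_pos k)).2.2 n g lam hlam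
      have hswap : ∑ i, ∑ j, lam i * lam j * ψ ((g i)⁻¹ * g j)
          = ∑' k : ℕ, ∑ i, ∑ j, lam i * lam j * term k ((g i)⁻¹ * g j) := by
        have h1 : ∀ i j : Fin n, lam i * lam j * ψ ((g i)⁻¹ * g j)
            = ∑' k : ℕ, lam i * lam j * term k ((g i)⁻¹ * g j) := by
          intro i j
          simp only [hψdef]
          exact tsum_mul_left.symm
        rw [Finset.sum_congr rfl fun i _ => Finset.sum_congr rfl fun j _ => h1 i j]
        have step1 : ∀ i : Fin n, ∑ j, ∑' k : ℕ, lam i * lam j * term k ((g i)⁻¹ * g j)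
            = ∑' k : ℕ, ∑ j, lam i * lam j * term k ((g i)⁻¹ * g j) := fun i =>
          (Summable.tsum_finsetSum fun j _ => (hsummable _).mul_left _).symm
        rw [Finset.sum_congr rfl fun i _ => step1 i]
        exact (Summable.tsum_finsetSum fun i _ => summable_sum fun j _ => (hsummable _).mul_left _).symm
      rw [hswap]
      exact tsum_nonpos hterm_cnd
  · -- Properness
    intro R
    obtain ⟨n, hn⟩ := exists_nat_ge (2 * R)
    obtain ⟨K₀, hK₀c, hK₀⟩ := hprop₀ (t n)
    refine ⟨K₀, hK₀c, fun g hg => ?_⟩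
    have hterm_half : ∀ k ∈ Finset.range n, (1/2:ℝ) ≤ term k g := by
      intro k hk
      have hkn : k ≤ n := (Finset.mem_range.mp hk).le
      have h1 : (1:ℝ) ≤ ψ₀ g / t k := by
        rw [le_div_iff₀ (ht_pos k), one_mul]
        exact (ht_mono hkn).trans (hK₀ g hg)
      have h2 : Real.exp (-(ψ₀ g / t k)) ≤ Real.exp (-1) := Real.exp_le_exp.mpr (by linarith)
      have h3 : Real.exp (-1) ≤ 1/2 := by
        have hmul : Real.exp (-1) * Real.exp 1 = 1 := by
          rw [← Real.exp_add]; norm_num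
        have h2e : (2:ℝ) ≤ Real.exp 1 := by
          have := Real.add_one_le_exp 1; linarith
        nlinarith [(Real.exp_pos (-1)).le]
      simp only [htermdef]
      linarith
    calc R ≤ (n : ℝ) / 2 := by linarith
      _ = ∑ _k ∈ Finset.range n, (1/2:ℝ) := by
          rw [Finset.sum_const, Finset.card_range, nsmul_eq_mul]; ring
      _ ≤ ∑ k ∈ Finset.range n, term k g := Finset.sum_le_sum hterm_half
      _ ≤ ψ g := Summable.sum_le_tsum (Finset.range n) (fun k _ => hterm_nonneg k g) (hsummable g)
  · -- Domination by f
    intro g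
    have hex : ∃ n : ℕ, g ∈ K n := by
      by_contra hcon
      push_neg at hcon
      obtain ⟨n, hn⟩ := exists_nat_gt (f g)
      have := hKnot n g (hcon n)
      linarith
    obtain ⟨n, hgKn, hmin⟩ : ∃ n, g ∈ K n ∧ ∀ m < n, g ∉ K m :=
      ⟨Nat.find hex, Nat.find_spec hex, fun m hm => Nat.find_min hex hm⟩
    cases n with
    | zero =>
      have hψg : ψ g ≤ 1 := by
        have hbound : ∀ k : ℕ, term k g ≤ (1/2:ℝ)^(k+1) := fun k =>
          hhalf k g ((hMb 0 g hgKn).trans (hMmono (Nat.zero_le _)))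
        calc ψ g ≤ ∑' k : ℕ, (1/2:ℝ)^(k+1) :=
              Summable.tsum_le_tsum hbound (hsummable g)
                ((summable_nat_add_iff 1).mpr summable_geometric_two)
          _ = 1 := by
              have he : ∀ k : ℕ, (1/2:ℝ)^(k+1) = (1/2:ℝ)^k * (1/2:ℝ) := fun k => pow_succ _ _
              rw [tsum_congr he, tsum_mul_right, tsum_geometric_two]
              norm_num
      exact hψg.trans (hf1 g)
    | succ m =>
      have hfg : (m:ℝ) + 2 ≤ f g := hKnot m g (hmin m (Nat.lt_succ_self m))
      have h1 : ∑ k ∈ Finset.range (m+1), term k g ≤ (m : ℝ) + 1 := by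
        calc ∑ k ∈ Finset.range (m+1), term k g ≤ ∑ _k ∈ Finset.range (m+1), (1:ℝ) :=
              Finset.sum_le_sum fun k _ => hterm_le_one k g
          _ = (m : ℝ) + 1 := by simp
      have h2 : ∑' k : ℕ, term (k + (m+1)) g ≤ (1/2:ℝ)^(m+1) := by
        have hbound : ∀ k : ℕ, term (k + (m+1)) g ≤ (1/2:ℝ)^(k + (m+1) + 1) := fun k =>
          hhalf _ g ((hMb (m+1) g hgKn).trans (hMmono (by omega)))
        calc ∑' k : ℕ, term (k + (m+1)) g ≤ ∑' k : ℕ, (1/2:ℝ)^(k + (m+1) + 1) :=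
              Summable.tsum_le_tsum hbound ((summable_nat_add_iff (m+1)).mpr (hsummable g))
                ((summable_nat_add_iff (m+2)).mpr summable_geometric_two)
          _ = (1/2:ℝ)^(m+1) := by
              have he : ∀ k : ℕ, (1/2:ℝ)^(k + (m+1) + 1) = (1/2:ℝ)^k * (1/2:ℝ)^(m+2) := by
                intro k
                rw [← pow_add]
                congr 1
              rw [tsum_congr he, tsum_mul_right, tsum_geometric_two, pow_succ]
              ring
      have hψg : ψ g = ∑ k ∈ Finset.range (m+1), term k g + ∑' k, term (k + (m+1)) g :=
        (Summable.sum_add_tsum_nat_add (m+1) (hsummable g)).symm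
      have hpow1 : (1/2:ℝ)^(m+1) ≤ 1 := pow_le_one₀ (by norm_num) (by norm_num)
      calc ψ g = ∑ k ∈ Finset.range (m+1), term k g + ∑' k, term (k + (m+1)) g := hψg
        _ ≤ ((m : ℝ) + 1) + (1/2:ℝ)^(m+1) := add_le_add h1 h2
        _ ≤ (m : ℝ) + 2 := by linarith
        _ ≤ f g := by
            linarith
end
end

section
/- Let u : ℝ₊ → ℝ be a proper function (u(t) → ∞ as t → ∞) with u(t) ≥ 1 for all t ∈ ℝ₊. Then there exists a proper Bernstein function F : ℝ₊ → ℝ₊ (F(t) → ∞ as t → ∞) such that F(t) ≤ u(t) for all t ∈ ℝ₊. -/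
open MeasureTheory Filter Topology
open scoped ENNReal

noncomputable section

lemma one_sub_exp_neg_le (y : ℝ) : 1 - Real.exp (-y) ≤ y := by
  have := Real.add_one_le_exp (-y); linarith

lemma one_sub_exp_neg_nonneg {y : ℝ} (hy : 0 ≤ y) : 0 ≤ 1 - Real.exp (-y) := by
  have : Real.exp (-y) ≤ 1 := Real.exp_le_one_iff.mpr (by linarith)
  linarith

lemma one_sub_exp_neg_le_one (y : ℝ) : 1 - Real.exp (-y) ≤ 1 := by
  have := Real.exp_pos (-y); linarith

section Aux
variable {s : ℕ → ℝ}

lemma aux_doubling (hsd : ∀ n, 2 * s n ≤ s (n + 1)) :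
    ∀ j m, 2 ^ j * s m ≤ s (j + m) := by
  intro j m
  induction j with
  | zero => simp
  | succ j ih =>
      have h2 : 2 * (2 ^ j * s m) ≤ 2 * s (j + m) := by linarith
      calc 2 ^ (j+1) * s m = 2 * (2 ^ j * s m) := by ring
        _ ≤ 2 * s (j + m) := h2
        _ ≤ s (j + m + 1) := hsd _
        _ = s (j + 1 + m) := by ring_nf

lemma aux_pow (hs0 : 1 ≤ s 0) (hsd : ∀ n, 2 * s n ≤ s (n + 1)) (n : ℕ) :
    (2:ℝ) ^ n ≤ s n := by
  have := aux_doubling hsd n 0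
  simpa using le_trans (by nlinarith [pow_pos (by norm_num : (0:ℝ) < 2) n]) this

lemma aux_pos (hs0 : 1 ≤ s 0) (hsd : ∀ n, 2 * s n ≤ s (n + 1)) (n : ℕ) :
    0 < s n :=
  lt_of_lt_of_le (pow_pos (by norm_num) n) (aux_pow hs0 hsd n)

lemma aux_mono (hs0 : 1 ≤ s 0) (hsd : ∀ n, 2 * s n ≤ s (n + 1)) : Monotone s :=
  monotone_nat_of_le_succ fun n => le_trans (by nlinarith [aux_pos hs0 hsd n]) (hsd n)

lemma aux_inv_le (hs0 : 1 ≤ s 0) (hsd : ∀ n, 2 * s n ≤ s (n + 1)) (j m : ℕ) :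
    (s (j + m))⁻¹ ≤ (2:ℝ)⁻¹ ^ j * (s m)⁻¹ := by
  have hm := aux_pos hs0 hsd m
  have hjm := aux_pos hs0 hsd (j + m)
  have h := aux_doubling hsd j m
  rw [inv_pow, ← mul_inv]
  exact inv_anti₀ (by positivity) h

lemma aux_inv_le' (hs0 : 1 ≤ s 0) (hsd : ∀ n, 2 * s n ≤ s (n + 1)) (n : ℕ) :
    (s n)⁻¹ ≤ (2:ℝ)⁻¹ ^ n := by
  have := aux_inv_le hs0 hsd n 0
  simp only [Nat.add_zero] at this
  calc (s n)⁻¹ ≤ (2:ℝ)⁻¹ ^ n * (s 0)⁻¹ := this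
    _ ≤ (2:ℝ)⁻¹ ^ n * 1 := by
        have : (s 0)⁻¹ ≤ 1 := by
          rw [inv_le_one_iff₀]; right; exact hs0
        have hp : (0:ℝ) ≤ (2:ℝ)⁻¹ ^ n := by positivity
        nlinarith
    _ = (2:ℝ)⁻¹ ^ n := mul_one _

end Aux

section BFAux
variable {s : ℕ → ℝ}

/-- The summands of our Bernstein function. -/
def gterm (s : ℕ → ℝ) (t : ℝ) (n : ℕ) : ℝ :=
  2⁻¹ * (1 - Real.exp (-(t * (s n)⁻¹)))

/-- Our Bernstein function. -/
def BF (s : ℕ → ℝ) (t : ℝ) : ℝ := ∑' n, gterm s t n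

lemma gterm_nonneg (hs0 : 1 ≤ s 0) (hsd : ∀ n, 2 * s n ≤ s (n + 1))
    {t : ℝ} (ht : 0 ≤ t) (n : ℕ) : 0 ≤ gterm s t n := by
  have := aux_pos hs0 hsd n
  have h : 0 ≤ t * (s n)⁻¹ := by positivity
  have := one_sub_exp_neg_nonneg h
  unfold gterm; linarith

lemma gterm_le_half {t : ℝ} (n : ℕ) : gterm s t n ≤ 2⁻¹ := by
  have := one_sub_exp_neg_le_one (t * (s n)⁻¹)
  unfold gterm; linarith

lemma gterm_le (hs0 : 1 ≤ s 0) (hsd : ∀ n, 2 * s n ≤ s (n + 1))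
    (t : ℝ) (n : ℕ) : gterm s t n ≤ 2⁻¹ * (t * (s n)⁻¹) := by
  have := one_sub_exp_neg_le (t * (s n)⁻¹)
  unfold gterm; linarith

lemma summable_gterm (hs0 : 1 ≤ s 0) (hsd : ∀ n, 2 * s n ≤ s (n + 1))
    {t : ℝ} (ht : 0 ≤ t) : Summable (gterm s t) := by
  have hb : ∀ n, gterm s t n ≤ (2⁻¹ * t) * (2:ℝ)⁻¹ ^ n := by
    intro n
    refine le_trans (gterm_le hs0 hsd t n) ?_
    have h1 := aux_inv_le' hs0 hsd n
    have h2 : (0:ℝ) ≤ t := ht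
    nlinarith [pow_pos (by norm_num : (0:ℝ) < 2⁻¹) n]
  exact Summable.of_nonneg_of_le (gterm_nonneg hs0 hsd ht) hb
    ((summable_geometric_of_lt_one (by norm_num) (by norm_num)).mul_left _)

lemma tsum_geom_half : (∑' n : ℕ, ((2:ℝ)⁻¹) ^ n) = 2 := by
  rw [inv_eq_one_div]; exact tsum_geometric_two

/-- tail bound : `∑' j, gterm s t (j + m) ≤ t * (s m)⁻¹`. -/
lemma tsum_gterm_tail_le (hs0 : 1 ≤ s 0) (hsd : ∀ n, 2 * s n ≤ s (n + 1))
    {t : ℝ} (ht : 0 ≤ t) (m : ℕ) :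
    (∑' j, gterm s t (j + m)) ≤ t * (s m)⁻¹ := by
  have hsm := aux_pos hs0 hsd m
  have hb : ∀ j : ℕ, gterm s t (j + m) ≤ (2⁻¹ * (t * (s m)⁻¹)) * (2:ℝ)⁻¹ ^ j := by
    intro j
    refine le_trans (gterm_le hs0 hsd t _) ?_
    have h1 := aux_inv_le hs0 hsd j m
    have hp : (0:ℝ) ≤ (2:ℝ)⁻¹ ^ j := by positivity
    have hsp : (0:ℝ) < (s (j+m))⁻¹ := by
      have := aux_pos hs0 hsd (j+m); positivity
    nlinarith
  calc (∑' j, gterm s t (j + m))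
      ≤ ∑' j : ℕ, (2⁻¹ * (t * (s m)⁻¹)) * (2:ℝ)⁻¹ ^ j := by
        apply Summable.tsum_le_tsum hb
        · exact (summable_nat_add_iff m).2 (summable_gterm hs0 hsd ht)
        · exact (summable_geometric_of_lt_one (by norm_num) (by norm_num)).mul_left _
    _ = (2⁻¹ * (t * (s m)⁻¹)) * 2 := by rw [tsum_mul_left, tsum_geom_half]
    _ = t * (s m)⁻¹ := by ring

end BFAux

lemma ofReal_half_pow (n : ℕ) : ENNReal.ofReal ((2:ℝ)⁻¹ ^ n) = (2:ℝ≥0∞)⁻¹ ^ n := by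
  rw [ENNReal.ofReal_pow (by norm_num)]
  congr 1
  rw [ENNReal.ofReal_inv_of_pos (by norm_num)]
  norm_num

lemma tsum_ennreal_geom_half : (∑' n : ℕ, ((2:ℝ≥0∞)⁻¹) ^ n) = 2 := by
  rw [ENNReal.tsum_geometric, ENNReal.one_sub_inv_two, inv_inv]

/-- A Bernstein function: `F(t) = at + ∫₀^∞ (1 − e^{−tx}) dμ(x)` for some `a ≥ 0` and some
Borel measure `μ` on `(0,∞)` with `μ[ε,∞) < ∞` for all `ε > 0` and `∫₀¹ x dμ(x) < ∞`. -/
def IsBernstein (F : ℝ → ℝ) : Prop :=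
  ContinuousOn F (Set.Ici 0) ∧ (∀ t ≥ (0:ℝ), 0 ≤ F t) ∧
  ∃ (a : ℝ) (μ : Measure ℝ), 0 ≤ a ∧
    μ (Set.Iic 0) = 0 ∧
    (∀ ε > (0:ℝ), μ (Set.Ici ε) < ⊤) ∧
    IntegrableOn (fun x => x) (Set.Ioc 0 1) μ ∧
    ∀ t > (0:ℝ), F t = a * t + ∫ x, (1 - Real.exp (-(t * x))) ∂μ

/-- Below any proper function `u ≥ 1` on `ℝ₊` there is a proper Bernstein function. -/
theorem exists_proper_bernstein_below
    (u : ℝ → ℝ) (huproper : Tendsto u atTop atTop) (hu1 : ∀ t ≥ (0:ℝ), 1 ≤ u t) :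
    ∃ F : ℝ → ℝ, IsBernstein F ∧ Tendsto F atTop atTop ∧
      ∀ t ≥ (0:ℝ), F t ≤ u t := by
  classical
  have hNex : ∀ n : ℕ, ∃ T : ℝ, ∀ r ≥ T, (n:ℝ) + 2 ≤ u r := fun n =>
    eventually_atTop.mp (huproper.eventually_ge_atTop ((n:ℝ)+2))
  choose N hN using hNex
  set s : ℕ → ℝ := fun n =>
    (Nat.rec (max 1 (N 0)) (fun n sn => max (2 * sn) (N (n+1))) n : ℝ) with hsdef
  have hs0 : 1 ≤ s 0 := le_max_left _ _
  have hsd : ∀ n, 2 * s n ≤ s (n + 1) := fun n => le_max_left _ _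
  have hsN : ∀ n, N n ≤ s n := by
    intro n; cases n with
    | zero => exact le_max_right _ _
    | succ m => exact le_max_right _ _
  have husn : ∀ n : ℕ, ∀ r, s n ≤ r → (n:ℝ) + 2 ≤ u r :=
    fun n r hr => hN n r (le_trans (hsN n) hr)
  have hpos : ∀ n, 0 < s n := aux_pos hs0 hsd
  have hpow : ∀ n, (2:ℝ) ^ n ≤ s n := aux_pow hs0 hsd
  have hsum : ∀ {t : ℝ}, 0 ≤ t → Summable (gterm s t) := fun {t} ht =>
    summable_gterm hs0 hsd ht
  refine ⟨BF s, ⟨?_, ?_, 0, Measure.sum (fun n => ((2:ℝ≥0∞)⁻¹) • Measure.dirac ((s n)⁻¹)),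
    le_refl 0, ?_, ?_, ?_, ?_⟩, ?_, ?_⟩
  · -- ContinuousOn
    intro t₀ ht₀
    have ht₀' : (0:ℝ) ≤ t₀ := ht₀
    set R : ℝ := t₀ + 1 with hRdef
    have hR : t₀ < R := lt_add_one t₀
    have hR0 : 0 < R := by simp only [hRdef]; linarith
    set G : ℝ → ℝ := fun t => ∑' n, 2⁻¹ * (1 - Real.exp (-(min (max t 0) R * (s n)⁻¹)))
      with hGdef
    have hGc : Continuous G := by
      apply continuous_tsum (u := fun n => (2⁻¹ * R) * (2:ℝ)⁻¹ ^ n)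
      · intro n; fun_prop
      · exact (summable_geometric_of_lt_one (by norm_num) (by norm_num)).mul_left _
      · intro n t
        have hy0 : 0 ≤ min (max t 0) R := le_min (le_max_right _ _) hR0.le
        have hyR : min (max t 0) R ≤ R := min_le_right _ _
        have hxp : 0 < (s n)⁻¹ := by have := hpos n; positivity
        have hb1 : 0 ≤ 1 - Real.exp (-(min (max t 0) R * (s n)⁻¹)) :=
          one_sub_exp_neg_nonneg (by positivity)
        have hb2 : 1 - Real.exp (-(min (max t 0) R * (s n)⁻¹)) ≤
            min (max t 0) R * (s n)⁻¹ := one_sub_exp_neg_le _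
        have hinv := aux_inv_le' hs0 hsd n
        rw [Real.norm_eq_abs, abs_of_nonneg (by linarith)]
        have hp : (0:ℝ) ≤ (2:ℝ)⁻¹ ^ n := by positivity
        nlinarith
    have hagree : ∀ t, 0 ≤ t → t < R → G t = BF s t := by
      intro t h0 hR'
      simp only [hGdef, BF, gterm, max_eq_left h0, min_eq_left hR'.le]
    refine (hGc.continuousAt.continuousWithinAt :
      ContinuousWithinAt G (Set.Ici 0) t₀).congr_of_eventuallyEq ?_ ?_
    · have h1 : ∀ᶠ t in 𝓝[Set.Ici (0:ℝ)] t₀, t ∈ Set.Ici (0:ℝ) :=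
        eventually_mem_nhdsWithin
      have h2 : ∀ᶠ t in 𝓝[Set.Ici (0:ℝ)] t₀, t < R :=
        ((isOpen_Iio.eventually_mem (show t₀ ∈ Set.Iio R from hR)).filter_mono
          nhdsWithin_le_nhds)
      filter_upwards [h1, h2] with t h0 hlt
      exact (hagree t h0 hlt).symm
    · exact (hagree t₀ ht₀' hR).symm
  · -- nonneg
    intro t ht
    exact tsum_nonneg (gterm_nonneg hs0 hsd ht)
  · -- μ (Iic 0) = 0
    rw [Measure.sum_apply _ measurableSet_Iic]
    have h : ∀ n : ℕ, (((2:ℝ≥0∞)⁻¹) • Measure.dirac ((s n)⁻¹)) (Set.Iic 0) = 0 := by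
      intro n
      have hx : (s n)⁻¹ ∉ Set.Iic (0:ℝ) := by
        simp only [Set.mem_Iic, not_le]
        have := hpos n; positivity
      simp [Measure.smul_apply, Measure.dirac_apply' _ measurableSet_Iic,
        Set.indicator_of_notMem hx]
    simp [h]
  · -- μ (Ici ε) < ⊤
    intro ε hε
    obtain ⟨K, hK⟩ : ∃ K : ℕ, ε⁻¹ < 2 ^ K := pow_unbounded_of_one_lt _ (by norm_num)
    rw [Measure.sum_apply _ measurableSet_Ici]
    have hzero : ∀ n ∉ Finset.range K,
        (((2:ℝ≥0∞)⁻¹) • Measure.dirac ((s n)⁻¹)) (Set.Ici ε) = 0 := by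
      intro n hn
      simp only [Finset.mem_range, not_lt] at hn
      have hx : (s n)⁻¹ ∉ Set.Ici ε := by
        simp only [Set.mem_Ici, not_le]
        have h1 : (s n)⁻¹ ≤ (2:ℝ)⁻¹ ^ n := aux_inv_le' hs0 hsd n
        have h2 : (2:ℝ)⁻¹ ^ n ≤ (2:ℝ)⁻¹ ^ K :=
          pow_le_pow_of_le_one (by norm_num) (by norm_num) hn
        have h3 : (2:ℝ)⁻¹ ^ K < ε := by
          rw [inv_pow, inv_lt_comm₀ (by positivity) hε]
          exact hK
        linarith
      simp [Measure.smul_apply, Measure.dirac_apply' _ measurableSet_Ici,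
        Set.indicator_of_notMem hx]
    rw [tsum_eq_sum hzero]
    refine ENNReal.sum_lt_top.mpr fun n _ => ?_
    have : (((2:ℝ≥0∞)⁻¹) • Measure.dirac ((s n)⁻¹)) (Set.Ici ε) ≤ 2⁻¹ := by
      rw [Measure.smul_apply, smul_eq_mul]
      calc 2⁻¹ * Measure.dirac ((s n)⁻¹) (Set.Ici ε) ≤ 2⁻¹ * 1 := by
            gcongr
            exact prob_le_one
        _ = 2⁻¹ := mul_one _
    exact lt_of_le_of_lt this (by norm_num)
  · -- IntegrableOn
    refine ⟨measurable_id.aestronglyMeasurable, ?_⟩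
    rw [HasFiniteIntegral]
    rw [Measure.restrict_sum _ measurableSet_Ioc, lintegral_sum_measure]
    have heach : ∀ n : ℕ,
        (∫⁻ x, ‖x‖ₑ ∂((((2:ℝ≥0∞)⁻¹) • Measure.dirac ((s n)⁻¹)).restrict (Set.Ioc 0 1)))
          = 2⁻¹ * ENNReal.ofReal ((s n)⁻¹) := by
      intro n
      have hmem : (s n)⁻¹ ∈ Set.Ioc (0:ℝ) 1 := by
        constructor
        · have := hpos n; positivity
        · rw [inv_le_one_iff₀]; right; exact le_trans (one_le_pow₀ (by norm_num)) (hpow n)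
      rw [Measure.restrict_smul, MeasureTheory.restrict_dirac' measurableSet_Ioc, if_pos hmem,
        lintegral_smul_measure, lintegral_dirac]
      congr 1
      rw [← ofReal_norm, Real.norm_eq_abs,
        abs_of_nonneg (le_of_lt (by have := hpos n; positivity))]
    simp only [heach]
    calc (∑' n : ℕ, 2⁻¹ * ENNReal.ofReal ((s n)⁻¹))
        ≤ ∑' n : ℕ, 2⁻¹ * ((2:ℝ≥0∞)⁻¹) ^ n := by
          refine ENNReal.tsum_le_tsum fun n => ?_
          gcongr
          rw [← ofReal_half_pow n]
          exact ENNReal.ofReal_le_ofReal (aux_inv_le' hs0 hsd n)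
      _ = 2⁻¹ * ∑' n : ℕ, ((2:ℝ≥0∞)⁻¹) ^ n := ENNReal.tsum_mul_left
      _ = 2⁻¹ * 2 := by rw [tsum_ennreal_geom_half]
      _ < ⊤ := ENNReal.mul_lt_top (by norm_num) (by norm_num)
  · -- representation
    intro t ht
    set μ := Measure.sum (fun n => ((2:ℝ≥0∞)⁻¹) • Measure.dirac ((s n)⁻¹)) with hμdef
    have hint : Integrable (fun x => 1 - Real.exp (-(t * x))) μ := by
      refine ⟨(by fun_prop : Continuous fun x : ℝ => 1 - Real.exp (-(t * x))).aestronglyMeasurable, ?_⟩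
      rw [HasFiniteIntegral, hμdef, lintegral_sum_measure]
      have heach : ∀ n : ℕ,
          (∫⁻ x, ‖1 - Real.exp (-(t * x))‖ₑ ∂(((2:ℝ≥0∞)⁻¹) • Measure.dirac ((s n)⁻¹)))
            = 2⁻¹ * ENNReal.ofReal (1 - Real.exp (-(t * (s n)⁻¹))) := by
        intro n
        rw [lintegral_smul_measure, lintegral_dirac]
        congr 1
        rw [← ofReal_norm, Real.norm_eq_abs, abs_of_nonneg]
        exact one_sub_exp_neg_nonneg (by have := hpos n; positivity)
      simp only [heach]
      calc (∑' n : ℕ, 2⁻¹ * ENNReal.ofReal (1 - Real.exp (-(t * (s n)⁻¹))))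
          ≤ ∑' n : ℕ, 2⁻¹ * (ENNReal.ofReal t * ((2:ℝ≥0∞)⁻¹) ^ n) := by
            refine ENNReal.tsum_le_tsum fun n => ?_
            gcongr
            calc ENNReal.ofReal (1 - Real.exp (-(t * (s n)⁻¹)))
                ≤ ENNReal.ofReal (t * (s n)⁻¹) :=
                  ENNReal.ofReal_le_ofReal (one_sub_exp_neg_le _)
              _ = ENNReal.ofReal t * ENNReal.ofReal ((s n)⁻¹) :=
                  ENNReal.ofReal_mul ht.le
              _ ≤ ENNReal.ofReal t * ((2:ℝ≥0∞)⁻¹) ^ n := by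
                  gcongr
                  rw [← ofReal_half_pow n]
                  exact ENNReal.ofReal_le_ofReal (aux_inv_le' hs0 hsd n)
        _ = 2⁻¹ * (ENNReal.ofReal t * ∑' n : ℕ, ((2:ℝ≥0∞)⁻¹) ^ n) := by
            rw [← ENNReal.tsum_mul_left, ← ENNReal.tsum_mul_left]
        _ = 2⁻¹ * (ENNReal.ofReal t * 2) := by rw [tsum_ennreal_geom_half]
        _ < ⊤ := by
            refine ENNReal.mul_lt_top (by norm_num) (ENNReal.mul_lt_top ?_ (by norm_num))
            exact ENNReal.ofReal_lt_top
    rw [hμdef] at hint ⊢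
    rw [integral_sum_measure hint]
    have heach : ∀ n : ℕ,
        (∫ x, (1 - Real.exp (-(t * x))) ∂(((2:ℝ≥0∞)⁻¹) • Measure.dirac ((s n)⁻¹)))
          = gterm s t n := by
      intro n
      rw [integral_smul_measure, integral_dirac]
      simp only [gterm, smul_eq_mul]
      congr 1
      rw [ENNReal.toReal_inv]
      norm_num
    simp only [heach, BF, zero_mul, zero_add]
  · -- proper
    rw [tendsto_atTop]
    intro b
    set c : ℝ := 2⁻¹ * (1 - Real.exp (-1)) with hcdef
    have hc : 0 < c := by
      have h1 : Real.exp (-1) < 1 := Real.exp_lt_one_iff.mpr (by norm_num)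
      rw [hcdef]; nlinarith
    obtain ⟨k, hk⟩ := exists_nat_ge (b / c)
    have hbk : b ≤ ((k:ℝ) + 1) * c := by
      rw [div_le_iff₀ hc] at hk
      nlinarith
    filter_upwards [eventually_ge_atTop (max (s k) 0)] with t ht
    have ht0 : (0:ℝ) ≤ t := le_trans (le_max_right _ _) ht
    have hts : s k ≤ t := le_trans (le_max_left _ _) ht
    have hlow : ∀ n ∈ Finset.range (k+1), c ≤ gterm s t n := by
      intro n hn
      simp only [Finset.mem_range, Nat.lt_succ_iff] at hn
      have hsn : s n ≤ s k := aux_mono hs0 hsd hn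
      have h1 : 1 ≤ t * (s n)⁻¹ := by
        rw [← div_eq_mul_inv, le_div_iff₀ (hpos n)]
        linarith
      have h2 : Real.exp (-(t * (s n)⁻¹)) ≤ Real.exp (-1) :=
        Real.exp_le_exp.mpr (by linarith)
      rw [hcdef]; unfold gterm; linarith
    calc b ≤ ((k:ℝ) + 1) * c := hbk
      _ ≤ ∑ n ∈ Finset.range (k+1), gterm s t n := by
          have := Finset.card_nsmul_le_sum (Finset.range (k+1)) (gterm s t) c hlow
          rw [Finset.card_range, nsmul_eq_mul] at this
          push_cast at this ⊢
          linarith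
      _ ≤ BF s t := Summable.sum_le_tsum _ (fun n _ => gterm_nonneg hs0 hsd ht0 n) (hsum ht0)
  · -- below
    intro t ht
    by_cases hts0 : t < s 0
    · have h0 : BF s t ≤ t * (s 0)⁻¹ := by
        have h := tsum_gterm_tail_le hs0 hsd ht 0
        simpa [BF] using h
      have h1 : t * (s 0)⁻¹ ≤ 1 := by
        rw [← div_eq_mul_inv, div_le_one (hpos 0)]
        linarith
      linarith [hu1 t ht]
    · push_neg at hts0
      set M := ⌈t⌉₊ with hMdef
      set P : ℕ → Prop := fun n => s n ≤ t with hPdef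
      set k := Nat.findGreatest P M with hkdef
      have hPk : s k ≤ t :=
        Nat.findGreatest_spec (Nat.zero_le M) (show P 0 from hts0)
      have hkM : k + 1 ≤ M := by
        have h2k : (k:ℝ) + 1 ≤ 2 ^ k := by exact_mod_cast Nat.lt_two_pow_self (n := k)
        have hkt : (k:ℝ) + 1 ≤ t := le_trans h2k (le_trans (hpow k) hPk)
        have hM : t ≤ (M:ℝ) := Nat.le_ceil t
        exact_mod_cast le_trans hkt hM
      have hk1 : t < s (k+1) := by
        by_contra hcon
        push_neg at hcon
        exact Nat.findGreatest_is_greatest (Nat.lt_succ_self k) hkM hcon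
      have hsplit := Summable.sum_add_tsum_nat_add (f := gterm s t) (k+1) (hsum ht)
      have h1 : ∑ n ∈ Finset.range (k+1), gterm s t n ≤ ((k:ℝ)+1) * 2⁻¹ := by
        calc ∑ n ∈ Finset.range (k+1), gterm s t n
            ≤ ∑ _n ∈ Finset.range (k+1), (2⁻¹:ℝ) :=
              Finset.sum_le_sum fun n _ => gterm_le_half n
          _ = ((k:ℝ)+1) * 2⁻¹ := by
              rw [Finset.sum_const, Finset.card_range, nsmul_eq_mul]
              push_cast; ring
      have h2 : (∑' j, gterm s t (j + (k+1))) ≤ t * (s (k+1))⁻¹ :=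
        tsum_gterm_tail_le hs0 hsd ht (k+1)
      have h3 : t * (s (k+1))⁻¹ ≤ 1 := by
        rw [← div_eq_mul_inv, div_le_one (hpos (k+1))]
        exact hk1.le
      have hu : (k:ℝ) + 2 ≤ u t := husn k t hPk
      have hBF : BF s t = (∑ n ∈ Finset.range (k+1), gterm s t n) +
          ∑' j, gterm s t (j + (k+1)) := by
        rw [BF, ← hsplit]
      rw [hBF]
      have hk0 : (0:ℝ) ≤ (k:ℝ) := Nat.cast_nonneg k
      linarith
end
end

section
/- Let w : ℝ₊ → ℝ₊ be a function with sublinear growth, i.e. w(x)/x → 0 as x → ∞. Then there exists a Bernstein function F with sublinear growth (F(x)/x → 0 as x → ∞) and a constant x₀ such that F(x) ≥ w(x) for all x ≥ x₀. -/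
open MeasureTheory Filter Topology
open scoped ENNReal

noncomputable section

lemma aux_one_sub_exp_le (u : ℝ) : 1 - Real.exp (-u) ≤ u := by
  have := Real.add_one_le_exp (-u); linarith

lemma aux_one_sub_exp_nonneg {u : ℝ} (h : 0 ≤ u) : 0 ≤ 1 - Real.exp (-u) := by
  have : Real.exp (-u) ≤ 1 := Real.exp_le_one_iff.2 (by linarith)
  linarith

lemma aux_one_sub_exp_le_one (u : ℝ) : 1 - Real.exp (-u) ≤ 1 := by
  have := Real.exp_pos (-u); linarith

lemma aux_concave {u : ℝ} (h0 : 0 ≤ u) (h1 : u ≤ 1) :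
    (1 - Real.exp (-1)) * u ≤ 1 - Real.exp (-u) := by
  have hc := convexOn_exp.2 (Set.mem_univ (-1:ℝ)) (Set.mem_univ (0:ℝ)) h0
    (by linarith : (0:ℝ) ≤ 1 - u) (by ring)
  simp only [smul_eq_mul, mul_neg_one, mul_zero, add_zero, Real.exp_zero, mul_one] at hc
  nlinarith [hc]

/-- Above any sublinear function `w` on `ℝ₊` (eventually) there is a sublinear Bernstein
function. -/
theorem exists_sublinear_bernstein_above
    (w : ℝ → ℝ) (hw0 : ∀ x ≥ (0:ℝ), 0 ≤ w x)
    (hwsub : Tendsto (fun x => w x / x) atTop (𝓝 0)) :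
    ∃ F : ℝ → ℝ, IsBernstein F ∧ Tendsto (fun x => F x / x) atTop (𝓝 0) ∧
      ∃ x₀ : ℝ, ∀ x ≥ x₀, w x ≤ F x := by
  -- the geometric ratio
  set r : ℝ := 1/2 with hrdef
  have hr0 : (0:ℝ) ≤ r := by norm_num
  have hr1 : r < 1 := by norm_num
  have hrpos : ∀ n : ℕ, (0:ℝ) < r ^ n := fun n => pow_pos (by norm_num) n
  -- thresholds
  have h1 : ∀ n : ℕ, ∃ X : ℝ, ∀ x ≥ X, w x / x < r ^ n := by
    intro n
    obtain ⟨N, hN⟩ := Metric.tendsto_atTop.1 hwsub (r ^ n) (hrpos n)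
    exact ⟨N, fun x hx => by
      have := hN x hx
      rw [Real.dist_eq, sub_zero] at this
      exact lt_of_le_of_lt (le_abs_self _) this⟩
  choose X hX using h1
  -- the increasing sequence t
  set t : ℕ → ℝ := fun n => Nat.rec (max (X 0) 1) (fun k tk => max (X (k+1)) (tk + 1)) n
    with htdef
  have htX : ∀ n, X n ≤ t n := by
    intro n; cases n with
    | zero => exact le_max_left _ _
    | succ k => exact le_max_left _ _
  have htstep : ∀ n, t n + 1 ≤ t (n+1) := fun n => le_max_right _ _
  have ht1 : ∀ n, 1 ≤ t n := by
    intro n; induction n with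
    | zero => exact le_max_right _ _
    | succ k ih => have := htstep k; linarith
  have htge : ∀ n : ℕ, (n:ℝ) + 1 ≤ t n := by
    intro n; induction n with
    | zero => simpa using ht1 0
    | succ k ih => have := htstep k; push_cast; linarith
  have htpos : ∀ n, (0:ℝ) < t n := fun n => lt_of_lt_of_le one_pos (ht1 n)
  have hw : ∀ n : ℕ, ∀ x ≥ t n, w x ≤ r ^ n * x := by
    intro n x hx
    have hx1 : (1:ℝ) ≤ x := le_trans (ht1 n) hx
    have hxpos : (0:ℝ) < x := by linarith
    have := hX n x (le_trans (htX n) hx)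
    rw [div_lt_iff₀ hxpos] at this
    exact this.le
  -- constants
  set K : ℝ := (1 - Real.exp (-1))⁻¹ with hKdef
  have hE : (0:ℝ) < 1 - Real.exp (-1) := by
    have : Real.exp (-1) < 1 := Real.exp_lt_one_iff.2 (by norm_num)
    linarith
  have hKpos : 0 < K := inv_pos.2 hE
  set c : ℕ → ℝ := fun n => K * r ^ n * t (n+1) with hcdef
  set p : ℕ → ℝ := fun n => (t (n+1))⁻¹ with hpdef
  have hcpos : ∀ n, 0 < c n := fun n =>
    mul_pos (mul_pos hKpos (hrpos n)) (htpos (n+1))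
  have hppos : ∀ n, 0 < p n := fun n => inv_pos.2 (htpos (n+1))
  have hcp : ∀ n, c n * p n = K * r ^ n := by
    intro n
    simp only [hcdef, hpdef]
    rw [mul_assoc, mul_inv_cancel₀ (htpos (n+1)).ne', mul_one]
  have hgs : Summable (fun n => K * r ^ n) :=
    (summable_geometric_of_lt_one hr0 hr1).mul_left K
  -- the function F
  set F : ℝ → ℝ := fun x => ∑' n, c n * (1 - Real.exp (-(x * p n))) with hFdef
  -- term bounds
  have hterm_nonneg : ∀ n, ∀ x ≥ (0:ℝ), 0 ≤ c n * (1 - Real.exp (-(x * p n))) := by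
    intro n x hx
    exact mul_nonneg (hcpos n).le (aux_one_sub_exp_nonneg (mul_nonneg hx (hppos n).le))
  have hterm_le : ∀ n, ∀ x : ℝ, c n * (1 - Real.exp (-(x * p n))) ≤ x * (K * r ^ n) := by
    intro n x
    calc c n * (1 - Real.exp (-(x * p n))) ≤ c n * (x * p n) :=
          mul_le_mul_of_nonneg_left (aux_one_sub_exp_le _) (hcpos n).le
      _ = x * (c n * p n) := by ring
      _ = x * (K * r ^ n) := by rw [hcp]
  have hterm_le_c : ∀ n, ∀ x : ℝ, c n * (1 - Real.exp (-(x * p n))) ≤ c n := by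
    intro n x
    calc c n * (1 - Real.exp (-(x * p n))) ≤ c n * 1 :=
          mul_le_mul_of_nonneg_left (aux_one_sub_exp_le_one _) (hcpos n).le
      _ = c n := mul_one _
  have hFs : ∀ x : ℝ, 0 ≤ x → Summable (fun n => c n * (1 - Real.exp (-(x * p n)))) := by
    intro x hx
    exact Summable.of_nonneg_of_le (fun n => hterm_nonneg n x hx)
      (fun n => hterm_le n x) (hgs.mul_left x)
  have hFnn : ∀ x ≥ (0:ℝ), 0 ≤ F x := fun x hx =>
    tsum_nonneg (fun n => hterm_nonneg n x hx)
  -- continuity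
  have hcont : ContinuousOn F (Set.Ici 0) := by
    intro x hx
    have hxIcc : x ∈ Set.Icc (0:ℝ) (x+1) := ⟨hx, by linarith⟩
    have hTU : TendstoUniformlyOn
        (fun s y => ∑ n ∈ s, c n * (1 - Real.exp (-(y * p n)))) F atTop
        (Set.Icc (0:ℝ) (x+1)) := by
      apply tendstoUniformlyOn_tsum ((hgs.mul_left (x+1)))
      intro n y hy
      rw [Real.norm_eq_abs, abs_of_nonneg (hterm_nonneg n y hy.1)]
      calc c n * (1 - Real.exp (-(y * p n))) ≤ y * (K * r ^ n) := hterm_le n y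
        _ ≤ (x+1) * (K * r ^ n) := by
            apply mul_le_mul_of_nonneg_right hy.2
            positivity
    have hcO : ContinuousOn F (Set.Icc (0:ℝ) (x+1)) := by
      apply hTU.continuousOn
      refine Filter.Frequently.of_forall fun s => ?_
      apply continuousOn_finset_sum
      intro n _
      exact (Continuous.continuousOn (by fun_prop))
    have hmem : Set.Icc (0:ℝ) (x+1) ∈ 𝓝[Set.Ici (0:ℝ)] x := by
      rw [← Set.Ici_inter_Iic]
      exact Filter.inter_mem self_mem_nhdsWithin
        (mem_nhdsWithin_of_mem_nhds (Iic_mem_nhds (by linarith)))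
    exact (hcO.continuousWithinAt hxIcc).mono_of_mem_nhdsWithin hmem
  -- the measure
  set μ : Measure ℝ := Measure.sum (fun n => (ENNReal.ofReal (c n)) • Measure.dirac (p n))
    with hμdef
  have hμIic : μ (Set.Iic 0) = 0 := by
    rw [hμdef, Measure.sum_apply _ measurableSet_Iic]
    apply ENNReal.tsum_eq_zero.2
    intro n
    rw [Measure.smul_apply, Measure.dirac_apply' _ measurableSet_Iic,
      Set.indicator_of_notMem (by simpa using (hppos n))]
    simp
  have hμIci : ∀ ε > (0:ℝ), μ (Set.Ici ε) < ⊤ := by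
    intro ε hε
    set N : ℕ := ⌈ε⁻¹⌉₊ with hNdef
    have hsmall : ∀ n, N ≤ n → p n < ε := by
      intro n hn
      have h1 : ε⁻¹ < t (n+1) := by
        have h2 : ε⁻¹ ≤ (N:ℝ) := Nat.le_ceil _
        have h3 : (N:ℝ) ≤ (n:ℝ) := Nat.cast_le.2 hn
        have := htge (n+1); push_cast at this; linarith
      calc p n = (t (n+1))⁻¹ := rfl
        _ < (ε⁻¹)⁻¹ := by
            apply inv_strictAnti₀ (inv_pos.2 hε) h1
        _ = ε := inv_inv ε
    rw [hμdef, Measure.sum_apply _ measurableSet_Ici]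
    have hzero : ∀ n ∉ Finset.range N,
        (ENNReal.ofReal (c n) • Measure.dirac (p n)) (Set.Ici ε) = 0 := by
      intro n hn
      rw [Finset.mem_range, not_lt] at hn
      rw [Measure.smul_apply, Measure.dirac_apply' _ measurableSet_Ici,
        Set.indicator_of_notMem (by simpa using hsmall n hn)]
      simp
    rw [tsum_eq_sum hzero]
    apply ENNReal.sum_lt_top.2
    intro n _
    calc (ENNReal.ofReal (c n) • Measure.dirac (p n)) (Set.Ici ε)
        ≤ ENNReal.ofReal (c n) * 1 := by
          rw [Measure.smul_apply, smul_eq_mul]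
          exact mul_le_mul_right prob_le_one _
      _ < ⊤ := by simp [ENNReal.ofReal_lt_top]
  -- generic lintegral computation over μ
  have hlint : ∀ g : ℝ → ℝ≥0∞, ∫⁻ x, g x ∂μ = ∑' n, ENNReal.ofReal (c n) * g (p n) := by
    intro g
    rw [hμdef, lintegral_sum_measure]
    exact tsum_congr fun n => by rw [lintegral_smul_measure, lintegral_dirac, smul_eq_mul]
  -- integrability of x on (0,1]
  have hIntOn : IntegrableOn (fun x => x) (Set.Ioc 0 1) μ := by
    refine ⟨continuous_id.aestronglyMeasurable, ?_⟩
    rw [MeasureTheory.hasFiniteIntegral_def]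
    calc ∫⁻ a, (‖a‖₊ : ℝ≥0∞) ∂(μ.restrict (Set.Ioc 0 1))
        ≤ ∫⁻ a, (‖a‖₊ : ℝ≥0∞) ∂μ := lintegral_mono' Measure.restrict_le_self le_rfl
      _ = ∑' n, ENNReal.ofReal (c n) * (‖p n‖₊ : ℝ≥0∞) := hlint _
      _ = ∑' n, ENNReal.ofReal (K * r ^ n) := by
          refine tsum_congr fun n => ?_
          rw [← enorm_eq_nnnorm, Real.enorm_eq_ofReal (hppos n).le, ← ENNReal.ofReal_mul (hcpos n).le, hcp n]
      _ = ENNReal.ofReal (∑' n, K * r ^ n) :=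
          (ENNReal.ofReal_tsum_of_nonneg (fun n => (mul_pos hKpos (hrpos n)).le) hgs).symm
      _ < ⊤ := ENNReal.ofReal_lt_top
  -- integrability of the Bernstein integrand
  have hIntf : ∀ s : ℝ, 0 < s → Integrable (fun x => 1 - Real.exp (-(s * x))) μ := by
    intro s hs
    refine ⟨Continuous.aestronglyMeasurable (by fun_prop), ?_⟩
    rw [MeasureTheory.hasFiniteIntegral_def]
    calc ∫⁻ x, (‖1 - Real.exp (-(s * x))‖₊ : ℝ≥0∞) ∂μ
        = ∑' n, ENNReal.ofReal (c n) * (‖1 - Real.exp (-(s * p n))‖₊ : ℝ≥0∞) := hlint _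
      _ ≤ ∑' n, ENNReal.ofReal (s * (K * r ^ n)) := by
          refine ENNReal.tsum_le_tsum fun n => ?_
          rw [← enorm_eq_nnnorm, Real.enorm_eq_ofReal (aux_one_sub_exp_nonneg (mul_nonneg hs.le (hppos n).le)),
            ← ENNReal.ofReal_mul (hcpos n).le]
          apply ENNReal.ofReal_le_ofReal
          calc c n * (1 - Real.exp (-(s * p n))) ≤ c n * (s * p n) :=
                mul_le_mul_of_nonneg_left (aux_one_sub_exp_le _) (hcpos n).le
            _ = s * (c n * p n) := by ring
            _ = s * (K * r ^ n) := by rw [hcp]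
      _ = ENNReal.ofReal (∑' n, s * (K * r ^ n)) :=
          (ENNReal.ofReal_tsum_of_nonneg
            (fun n => mul_nonneg hs.le (mul_pos hKpos (hrpos n)).le) (hgs.mul_left s)).symm
      _ < ⊤ := ENNReal.ofReal_lt_top
  -- the integral representation
  have hFeq : ∀ s > (0:ℝ), F s = 0 * s + ∫ x, (1 - Real.exp (-(s * x))) ∂μ := by
    intro s hs
    have hint : ∫ x, (1 - Real.exp (-(s * x))) ∂μ
        = ∑' n, c n * (1 - Real.exp (-(s * p n))) := by
      rw [hμdef]
      rw [integral_sum_measure (hμdef ▸ hIntf s hs)]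
      refine tsum_congr fun n => ?_
      rw [integral_smul_measure, integral_dirac, smul_eq_mul,
        ENNReal.toReal_ofReal (hcpos n).le]
    rw [hint, hFdef]
    ring
  -- sublinearity of F
  have hsub : Tendsto (fun x => F x / x) atTop (𝓝 0) := by
    rw [Metric.tendsto_atTop]
    intro ε hε
    have htail := (tendsto_order.1
      (tendsto_tsum_compl_atTop_zero (fun n : ℕ => K * r ^ n))).2 (ε/2) (by linarith)
    obtain ⟨s, hs⟩ := htail.exists
    set C := ∑ n ∈ s, c n with hCdef
    have hC0 : 0 ≤ C := Finset.sum_nonneg fun n _ => (hcpos n).le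
    refine ⟨max 1 (2*C/ε + 1), fun x hx => ?_⟩
    have hx1 : (1:ℝ) ≤ x := le_trans (le_max_left _ _) hx
    have hx0 : (0:ℝ) < x := by linarith
    have hx2 : 2*C/ε + 1 ≤ x := le_trans (le_max_right _ _) hx
    have hsplit := Summable.sum_add_tsum_compl (s := s) (hFs x hx0.le)
    have h1 : ∑ n ∈ s, c n * (1 - Real.exp (-(x * p n))) ≤ C :=
      Finset.sum_le_sum fun n _ => hterm_le_c n x
    have h2 : ∑' (n : ↑(↑s : Set ℕ)ᶜ), c n * (1 - Real.exp (-(x * p (n:ℕ)))) ≤ x * (ε/2) := by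
      calc ∑' (n : ↑(↑s : Set ℕ)ᶜ), c n * (1 - Real.exp (-(x * p (n:ℕ))))
          ≤ ∑' (n : ↑(↑s : Set ℕ)ᶜ), x * (K * r ^ (n:ℕ)) :=
            Summable.tsum_le_tsum (fun n => hterm_le _ x) ((hFs x hx0.le).subtype _)
              ((hgs.mul_left x).subtype _)
        _ = x * ∑' (n : ↑(↑s : Set ℕ)ᶜ), K * r ^ (n:ℕ) := tsum_mul_left
        _ ≤ x * (ε/2) := mul_le_mul_of_nonneg_left hs.le hx0.le
    have hFle : F x ≤ C + x * (ε/2) := by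
      rw [hFdef]
      simp only []
      rw [← hsplit]
      exact add_le_add h1 h2
    rw [Real.dist_eq, sub_zero, abs_of_nonneg (div_nonneg (hFnn x hx0.le) hx0.le),
      div_lt_iff₀ hx0]
    have hCx : C < ε/2 * x := by
      have h3 : ε/2 * x ≥ ε/2 * (2*C/ε + 1) := by
        apply mul_le_mul_of_nonneg_left hx2 (by linarith)
      have h4 : ε/2 * (2*C/ε + 1) = C + ε/2 := by field_simp
      linarith
    linarith
  -- assemble
  refine ⟨F, ⟨hcont, hFnn, 0, μ, le_rfl, hμIic, hμIci, hIntOn, hFeq⟩, hsub, t 0, ?_⟩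
  intro x hx
  have hx1 : (1:ℝ) ≤ x := le_trans (ht1 0) hx
  have hx0 : (0:ℝ) < x := by linarith
  have hex : ∃ n : ℕ, x < t (n+1) := by
    refine ⟨⌈x⌉₊, ?_⟩
    have h1 : x ≤ (⌈x⌉₊:ℝ) := Nat.le_ceil x
    have h2 := htge (⌈x⌉₊+1)
    push_cast at h2
    linarith
  set n := Nat.find hex with hn
  have hlt : x < t (n+1) := Nat.find_spec hex
  have hge : t n ≤ x := by
    rcases Nat.eq_zero_or_pos n with h|h
    · rw [h]; exact hx
    · obtain ⟨k, hk⟩ := Nat.exists_eq_succ_of_ne_zero h.ne'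
      by_contra hcon
      push_neg at hcon
      have hmin := Nat.find_min hex (m := k) (by omega)
      exact hmin (by rw [← Nat.succ_eq_add_one, ← hk]; exact hcon)
  have hu0 : 0 ≤ x * p n := mul_nonneg hx0.le (hppos n).le
  have hu1 : x * p n ≤ 1 := by
    have : x * (t (n+1))⁻¹ ≤ t (n+1) * (t (n+1))⁻¹ :=
      mul_le_mul_of_nonneg_right hlt.le (inv_nonneg.2 (htpos (n+1)).le)
    rwa [mul_inv_cancel₀ (htpos (n+1)).ne'] at this
  have hkey : r ^ n * x ≤ c n * (1 - Real.exp (-(x * p n))) := by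
    have hcv := aux_concave hu0 hu1
    have h3 : c n * ((1 - Real.exp (-1)) * (x * p n)) ≤ c n * (1 - Real.exp (-(x * p n))) :=
      mul_le_mul_of_nonneg_left hcv (hcpos n).le
    refine le_trans (le_of_eq ?_) h3
    have hKE : K * (1 - Real.exp (-1)) = 1 := inv_mul_cancel₀ hE.ne'
    have htt : t (n+1) * (t (n+1))⁻¹ = 1 := mul_inv_cancel₀ (htpos (n+1)).ne'
    simp only [hcdef, hpdef]
    calc r ^ n * x = (K * (1 - Real.exp (-1))) * r ^ n * (t (n+1) * (t (n+1))⁻¹) * x := by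
          rw [hKE, htt]; ring
      _ = K * r ^ n * t (n+1) * ((1 - Real.exp (-1)) * (x * (t (n+1))⁻¹)) := by ring
  have hle : c n * (1 - Real.exp (-(x * p n))) ≤ F x :=
    Summable.le_tsum (hFs x hx0.le) n (fun j _ => hterm_nonneg j x hx0.le)
  calc w x ≤ r ^ n * x := hw n x hge
    _ ≤ c n * (1 - Real.exp (-(x * p n))) := hkey
    _ ≤ F x := hle
end
end
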